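/- arXiv:0709.2473 — 7 statements merged into one kernel-verified Lean document; each statement's English description precedes it below -/
import Mathlib

section
/- Two nonsingular complex n×n matrices A and B are congruent if and only if their cosquares A⁻ᵀA and B⁻ᵀB are similar. -/
open Polynomial

-- Hensel: square root of X modulo (X - C l)^m for l ≠ 0
theorem hensel_sqrt (l : ℂ) (hl : l ≠ 0) (m : ℕ) (hm : 1 ≤ m) :
    ∃ q : ℂ[X], (X - C l) ^ m ∣ q * q - X ∧ q.eval l ≠ 0 := by
  induction m with
  | zero => omega
  | succ m ih =>
    rcases Nat.eq_zero_or_pos m with h1 | h2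
    · subst h1
      obtain ⟨z, hz⟩ := IsAlgClosed.exists_pow_nat_eq l (n := 2) (by norm_num)
      refine ⟨C z, ⟨-1, ?_⟩, ?_⟩
      · have : (C z) * (C z) = C l := by rw [← C_mul, ← hz]; ring_nf
        rw [this]; ring
      · simp only [eval_C]
        intro h; apply hl; rw [← hz, h]; ring
    · obtain ⟨q, ⟨d, hd⟩, hq⟩ := ih h2
      set e := q.eval l with he
      set c := -(d.eval l) / (2 * e) with hc
      refine ⟨q + C c * (X - C l) ^ m, ?_, ?_⟩
      · have key : q * q - X + (2 * C c * q + C c * C c * (X - C l) ^ m) * (X - C l) ^ m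
            = (q + C c * (X - C l) ^ m) * (q + C c * (X - C l) ^ m) - X := by ring
        rw [← key, hd]
        have h1 : (X - C l) ∣ (d + (2 * C c * q + C c * C c * (X - C l) ^ m)) := by
          rw [dvd_iff_isRoot]
          have : (X - C l).IsRoot l := by simp
          have hXm : ((X - C l) ^ m).eval l = 0 := by
            simp [eval_pow, zero_pow h2.ne']
          simp only [IsRoot, eval_add, eval_mul, eval_pow, eval_sub, eval_X, eval_C,
            eval_ofNat, sub_self, zero_pow h2.ne', mul_zero, add_zero]
          rw [hc]
          field_simp
          ring
        obtain ⟨u, hu⟩ := h1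
        refine ⟨u, ?_⟩
        calc (X - C l) ^ m * d + (2 * C c * q + C c * C c * (X - C l) ^ m) * (X - C l) ^ m
            = (X - C l) ^ m * (d + (2 * C c * q + C c * C c * (X - C l) ^ m)) := by ring
          _ = (X - C l) ^ m * ((X - C l) * u) := by rw [hu]
          _ = (X - C l) ^ (m + 1) * u := by ring
      · simp only [eval_add, eval_mul, eval_pow, eval_sub, eval_X, eval_C, sub_self,
          zero_pow h2.ne', mul_zero, add_zero]
        exact hq

-- coprimality of (X - C l) with g when g(l) ≠ 0
theorem coprime_X_sub_C (l : ℂ) (g : ℂ[X]) (hg : g.eval l ≠ 0) :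
    IsCoprime (X - C l) g := by
  refine ⟨-(C (g.eval l)⁻¹) * (g /ₘ (X - C l)), C (g.eval l)⁻¹, ?_⟩
  have h := modByMonic_add_div g (X - C l)
  rw [modByMonic_X_sub_C_eq_C_eval] at h
  have : C (g.eval l)⁻¹ * C (g.eval l) = 1 := by
    rw [← C_mul, inv_mul_cancel₀ hg, C_1]
  linear_combination (-(C (g.eval l)⁻¹)) * h + this

-- main polynomial lemma
theorem poly_sqrt_aux : ∀ N : ℕ, ∀ μ : ℂ[X], μ.natDegree ≤ N → μ ≠ 0 → μ.eval 0 ≠ 0 →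
    ∃ r : ℂ[X], μ ∣ r * r - X := by
  intro N
  induction N with
  | zero =>
    intro μ hN h0 hμ
    refine ⟨0, ?_⟩
    have hd : μ.natDegree = 0 := Nat.le_zero.mp hN
    have : IsUnit μ := by
      rw [eq_C_of_natDegree_eq_zero hd]
      refine isUnit_C.2 (isUnit_iff_ne_zero.2 ?_)
      intro h
      exact hμ (by rw [eq_C_of_natDegree_eq_zero hd, h]; simp)
    exact this.dvd
  | succ N IH' =>
  intro μ hN h0 hμ
  rcases Nat.eq_zero_or_pos μ.natDegree with hd | hd
  · refine ⟨0, ?_⟩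
    have : IsUnit μ := by
      rw [eq_C_of_natDegree_eq_zero hd]
      refine isUnit_C.2 (isUnit_iff_ne_zero.2 ?_)
      intro h
      exact hμ (by rw [eq_C_of_natDegree_eq_zero hd, h]; simp)
    exact this.dvd
  · obtain ⟨l, hl⟩ := IsAlgClosed.exists_root μ (by
      rw [degree_eq_natDegree h0]
      exact_mod_cast hd.ne')
    have hlne : l ≠ 0 := fun h => hμ (by rw [h] at hl; exact hl)
    set m := rootMultiplicity l μ with hmdef
    set g := μ /ₘ (X - C l) ^ m with hgdef
    have hfac : (X - C l) ^ m * g = μ := pow_mul_divByMonic_rootMultiplicity_eq μ l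
    have hm1 : 1 ≤ m := (le_rootMultiplicity_iff h0).2 (by
      simpa using dvd_iff_isRoot.2 hl)
    have hgl : g.eval l ≠ 0 := eval_divByMonic_pow_rootMultiplicity_ne_zero l h0
    have hgne : g ≠ 0 := fun h => by simp [h] at hgl
    have hg0 : g.eval 0 ≠ 0 := by
      intro h
      apply hμ
      rw [← hfac]
      simp [h]
    have hdeg : g.natDegree < μ.natDegree := by
      have := natDegree_mul (pow_ne_zero m (X_sub_C_ne_zero l)) hgne
      rw [hfac] at this
      rw [this, natDegree_pow, natDegree_X_sub_C, mul_one]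
      omega
    obtain ⟨r₂, hr₂⟩ := IH' g (by omega) hgne hg0
    obtain ⟨q, hq, _⟩ := hensel_sqrt l hlne m hm1
    have hcop : IsCoprime ((X - C l) ^ m) g := (coprime_X_sub_C l g hgl).pow_left
    obtain ⟨u, v, huv⟩ := id hcop
    set s := r₂ * u * (X - C l) ^ m + q * v * g with hs
    have h1 : (X - C l) ^ m ∣ s - q := by
      refine ⟨r₂ * u - q * u, ?_⟩
      have : q * v * g = q * (1 - u * (X - C l) ^ m) := by
        rw [← huv]; ring
      rw [hs, this]; ring
    have h2 : g ∣ s - r₂ := by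
      refine ⟨q * v - r₂ * v, ?_⟩
      have : r₂ * u * (X - C l) ^ m = r₂ * (1 - v * g) := by
        rw [← huv]; ring
      rw [hs, this]; ring
    have h3 : (X - C l) ^ m ∣ s * s - X := by
      have : s * s - X = (s - q) * (s + q) + (q * q - X) := by ring
      rw [this]
      exact dvd_add (h1.mul_right _) hq
    have h4 : g ∣ s * s - X := by
      have : s * s - X = (s - r₂) * (s + r₂) + (r₂ * r₂ - X) := by ring
      rw [this]
      exact dvd_add (h2.mul_right _) hr₂
    exact ⟨s, hfac ▸ hcop.mul_dvd h3 h4⟩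

theorem poly_sqrt_of_ne_zero_root (μ : ℂ[X]) (h0 : μ ≠ 0) (hμ : μ.eval 0 ≠ 0) :
    ∃ r : ℂ[X], μ ∣ r * r - X :=
  poly_sqrt_aux μ.natDegree μ le_rfl h0 hμ

open Matrix

theorem matrix_aeval_transpose {n : ℕ} (M : Matrix (Fin n) (Fin n) ℂ) (p : ℂ[X]) :
    (Polynomial.aeval M p)ᵀ = Polynomial.aeval Mᵀ p := by
  induction p using Polynomial.induction_on' with
  | add p q hp hq => simp [map_add, transpose_add, hp, hq]
  | monomial k a =>
    simp only [Polynomial.aeval_monomial]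
    rw [transpose_mul, transpose_pow]
    have : ((algebraMap ℂ (Matrix (Fin n) (Fin n) ℂ)) a)ᵀ
        = (algebraMap ℂ (Matrix (Fin n) (Fin n) ℂ)) a := by
      simp [Matrix.algebraMap_eq_diagonal]
    rw [this, ← Algebra.commutes]

theorem matrix_aeval_comm {n : ℕ} (M A : Matrix (Fin n) (Fin n) ℂ)
    (h : M * A = A * Mᵀ) (p : ℂ[X]) :
    Polynomial.aeval M p * A = A * Polynomial.aeval Mᵀ p := by
  have hpow : ∀ k : ℕ, M ^ k * A = A * Mᵀ ^ k := by
    intro k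
    induction k with
    | zero => simp
    | succ k ih =>
      calc M ^ (k + 1) * A = M * (M ^ k * A) := by rw [pow_succ', mul_assoc]
        _ = M * A * Mᵀ ^ k := by rw [ih, mul_assoc]
        _ = A * Mᵀ * Mᵀ ^ k := by rw [h]
        _ = A * Mᵀ ^ (k + 1) := by rw [pow_succ', mul_assoc]
  induction p using Polynomial.induction_on' with
  | add p q hp hq => simp only [map_add, add_mul, mul_add, hp, hq]
  | monomial k a =>
    simp only [Polynomial.aeval_monomial]
    calc (algebraMap ℂ _) a * M ^ k * A = (algebraMap ℂ _) a * (M ^ k * A) := by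
          rw [mul_assoc]
      _ = (algebraMap ℂ _) a * (A * Mᵀ ^ k) := by rw [hpow]
      _ = A * ((algebraMap ℂ _) a * Mᵀ ^ k) := by
          rw [← mul_assoc, Algebra.commutes a A, mul_assoc]

/-- Every invertible complex matrix has a square root that is a polynomial in it. -/
theorem exists_poly_sqrt {n : ℕ} (M : Matrix (Fin n) (Fin n) ℂ) (hM : IsUnit M) :
    ∃ r : ℂ[X], Polynomial.aeval M r * Polynomial.aeval M r = M := by
  have hint : IsIntegral ℂ M := Algebra.IsIntegral.isIntegral M
  set μ := minpoly ℂ M with hμdef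
  have hμ0 : μ ≠ 0 := minpoly.ne_zero hint
  have heval0 : μ.eval 0 ≠ 0 := by
    intro h
    have hX : (X : ℂ[X]) ∣ μ :=
      Polynomial.X_dvd_iff.2 (by rwa [Polynomial.coeff_zero_eq_eval_zero])
    obtain ⟨g, hg⟩ := hX
    have hgne : g ≠ 0 := fun hh => hμ0 (by rw [hg, hh, mul_zero])
    have haev : Polynomial.aeval M μ = 0 := minpoly.aeval ℂ M
    rw [hg, _root_.map_mul, Polynomial.aeval_X] at haev
    have hgM : Polynomial.aeval M g = 0 := by
      have := congrArg (fun Z => M⁻¹ * Z) haev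
      simpa [← Matrix.mul_assoc, Matrix.nonsing_inv_mul M
        ((Matrix.isUnit_iff_isUnit_det M).mp hM)] using this
    have hdvd : μ ∣ g := minpoly.dvd ℂ M hgM
    have h1 : μ.natDegree ≤ g.natDegree :=
      Polynomial.natDegree_le_natDegree (Polynomial.degree_le_of_dvd hdvd hgne)
    have h2 : μ.natDegree = 1 + g.natDegree := by
      rw [hg, Polynomial.natDegree_mul Polynomial.X_ne_zero hgne, Polynomial.natDegree_X]
    omega
  obtain ⟨r, t, ht⟩ := poly_sqrt_of_ne_zero_root μ hμ0 heval0
  refine ⟨r, ?_⟩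
  have : Polynomial.aeval M (r * r - X) = 0 := by
    rw [ht, _root_.map_mul, minpoly.aeval, zero_mul]
  rw [map_sub, _root_.map_mul, Polynomial.aeval_X, sub_eq_zero] at this
  exact this


open Matrix

def MatSimilar {m : Type*} [Fintype m] [DecidableEq m] (A B : Matrix m m ℂ) : Prop :=
  ∃ S : Matrix m m ℂ, IsUnit S ∧ A = S⁻¹ * B * S

def MatCongruent {m : Type*} [Fintype m] [DecidableEq m] (A B : Matrix m m ℂ) : Prop :=
  ∃ S : Matrix m m ℂ, IsUnit S ∧ A = Sᵀ * B * S

-- forward-direction computation, also reused in the reverse direction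
theorem cosquare_congr {n : ℕ} (B S : Matrix (Fin n) (Fin n) ℂ)
    (hB : IsUnit B) (hS : IsUnit S) :
    ((Sᵀ * B * S)ᵀ)⁻¹ * (Sᵀ * B * S) = S⁻¹ * ((Bᵀ)⁻¹ * B) * S := by
  have hSd : IsUnit S.det := (Matrix.isUnit_iff_isUnit_det S).mp hS
  have hStd : IsUnit Sᵀ.det := by rwa [Matrix.det_transpose]
  have ht : (Sᵀ * B * S)ᵀ = Sᵀ * (Bᵀ * S) := by
    rw [transpose_mul, transpose_mul, transpose_transpose]
  rw [ht, Matrix.mul_inv_rev, Matrix.mul_inv_rev]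
  calc S⁻¹ * (Bᵀ)⁻¹ * (Sᵀ)⁻¹ * (Sᵀ * B * S)
      = S⁻¹ * (Bᵀ)⁻¹ * ((Sᵀ)⁻¹ * (Sᵀ * (B * S))) := by
        simp only [Matrix.mul_assoc]
    _ = S⁻¹ * (Bᵀ)⁻¹ * (B * S) := by
        rw [Matrix.nonsing_inv_mul_cancel_left _ _ hStd]
    _ = S⁻¹ * ((Bᵀ)⁻¹ * B) * S := by simp only [Matrix.mul_assoc]


/-- Nonsingular complex matrices are congruent if and only if their cosquares
`A⁻ᵀA` and `B⁻ᵀB` are similar. -/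
theorem congruent_iff_cosquares_similar {n : ℕ} (A B : Matrix (Fin n) (Fin n) ℂ)
    (hA : IsUnit A) (hB : IsUnit B) :
    MatCongruent A B ↔ MatSimilar ((Aᵀ)⁻¹ * A) ((Bᵀ)⁻¹ * B) := by
  have hAd : IsUnit A.det := (Matrix.isUnit_iff_isUnit_det A).mp hA
  have hAtd : IsUnit Aᵀ.det := by rwa [Matrix.det_transpose]
  have hBd : IsUnit B.det := (Matrix.isUnit_iff_isUnit_det B).mp hB
  constructor
  · rintro ⟨S, hS, rfl⟩
    exact ⟨S, hS, cosquare_congr B S hB hS⟩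
  · rintro ⟨P, hP, hsim⟩
    have hPd : IsUnit P.det := (Matrix.isUnit_iff_isUnit_det P).mp hP
    set C := Pᵀ * B * P with hCdef
    have hC : IsUnit C := by
      rw [Matrix.isUnit_iff_isUnit_det, hCdef, Matrix.det_mul, Matrix.det_mul,
        Matrix.det_transpose]
      exact (hPd.mul hBd).mul hPd
    have hCd : IsUnit C.det := (Matrix.isUnit_iff_isUnit_det C).mp hC
    have hCtd : IsUnit Cᵀ.det := by rwa [Matrix.det_transpose]
    -- equal cosquares
    have hE : (Aᵀ)⁻¹ * A = (Cᵀ)⁻¹ * C := by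
      rw [hCdef, cosquare_congr B P hB hP, ← hsim]
    -- M A = C = A Mᵀ
    set M := C * A⁻¹ with hMdef
    have hMA : M * A = C := by
      rw [hMdef, Matrix.nonsing_inv_mul_cancel_right _ _ hAd]
    have hF : C * A⁻¹ = Cᵀ * (Aᵀ)⁻¹ := by
      have h1 : Cᵀ * ((Aᵀ)⁻¹ * A) * A⁻¹ = Cᵀ * (Aᵀ)⁻¹ := by
        rw [Matrix.mul_assoc Cᵀ _ _, Matrix.mul_assoc,
          Matrix.mul_nonsing_inv _ hAd, Matrix.mul_one]
      have h2 : Cᵀ * ((Cᵀ)⁻¹ * C) * A⁻¹ = C * A⁻¹ := by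
        rw [Matrix.mul_nonsing_inv_cancel_left _ _ hCtd]
      rw [← h2, ← hE, h1]
    have hAMt : A * Mᵀ = C := by
      have : Mᵀ = A⁻¹ * C := by
        rw [hMdef, hF, transpose_mul, transpose_nonsing_inv, transpose_transpose,
          transpose_transpose]
      rw [this, Matrix.mul_nonsing_inv_cancel_left _ _ hAd]
    have hcomm : M * A = A * Mᵀ := by rw [hMA, hAMt]
    have hM : IsUnit M := by
      rw [Matrix.isUnit_iff_isUnit_det, hMdef, Matrix.det_mul]
      exact hCd.mul ((Matrix.isUnit_nonsing_inv_det A) hAd)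
    obtain ⟨r, hr⟩ := exists_poly_sqrt M hM
    set S := Polynomial.aeval M r with hSdef
    have hS : IsUnit S := by
      rw [Matrix.isUnit_iff_isUnit_det]
      have : S.det * S.det = M.det := by rw [← Matrix.det_mul, hr]
      have hMdet : IsUnit M.det := (Matrix.isUnit_iff_isUnit_det M).mp hM
      rw [← this] at hMdet
      exact isUnit_of_mul_isUnit_left hMdet
    have hSd : IsUnit S.det := (Matrix.isUnit_iff_isUnit_det S).mp hS
    have hStd : IsUnit Sᵀ.det := by rwa [Matrix.det_transpose]
    have hSA : S * A = A * Sᵀ := by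
      rw [hSdef, matrix_aeval_comm M A hcomm r, ← matrix_aeval_transpose]
    have hC2 : C = S * A * Sᵀ := by
      rw [Matrix.mul_assoc, ← hSA, ← Matrix.mul_assoc, hr, hMA]
    -- A = S⁻¹ * C * (Sᵀ)⁻¹
    have hA2 : A = S⁻¹ * C * (Sᵀ)⁻¹ := by
      rw [hC2]
      simp only [Matrix.mul_assoc]
      rw [Matrix.mul_nonsing_inv _ hStd, Matrix.mul_one,
        Matrix.nonsing_inv_mul_cancel_left _ _ hSd]
    refine ⟨P * (Sᵀ)⁻¹, ?_, ?_⟩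
    · rw [Matrix.isUnit_iff_isUnit_det, Matrix.det_mul]
      exact hPd.mul (Matrix.isUnit_nonsing_inv_det Sᵀ hStd)
    · have hkey : (P * (Sᵀ)⁻¹)ᵀ * B * (P * (Sᵀ)⁻¹) = S⁻¹ * C * (Sᵀ)⁻¹ := by
        rw [transpose_mul, transpose_nonsing_inv, transpose_transpose, hCdef]
        simp only [Matrix.mul_assoc]
      rw [hkey, ← hA2]
end

section
/- For any positive integer m and any complex number μ, the cosquare of the 2m×2m skew sum H_{2m}(μ) (when μ ≠ 0 so H_{2m}(μ) is nonsingular) equals the block diagonal matrix J_m(μ) ⊕ J_m(μ)⁻ᵀ, which is similar to J_m(μ) ⊕ J_m(μ⁻¹). -/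
open Matrix

/-- The n×n Jordan block with eigenvalue μ. -/
def JBlock (n : ℕ) (μ : ℂ) : Matrix (Fin n) (Fin n) ℂ :=
  Matrix.of fun i j => if i = j then μ else if (i : ℕ) + 1 = (j : ℕ) then 1 else 0

def MatrixSimilar {m : Type*} [Fintype m] [DecidableEq m] (A B : Matrix m m ℂ) : Prop :=
  ∃ S : Matrix m m ℂ, IsUnit S ∧ A = S⁻¹ * B * S

/-- The skew sum `H_{2m}(μ) = [[0, I],[J_m(μ), 0]]`. -/
def Hmat (m : ℕ) (μ : ℂ) : Matrix (Fin m ⊕ Fin m) (Fin m ⊕ Fin m) ℂ :=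
  Matrix.fromBlocks 0 1 (JBlock m μ) 0

open Finset in
lemma mul_JBlock_apply {m : ℕ} (ν : ℂ) (M : Matrix (Fin m) (Fin m) ℂ) (i j : Fin m) :
    (M * JBlock m ν) i j = ν * M i j +
      (if _ : (j : ℕ) = 0 then 0 else M i ⟨(j : ℕ) - 1, (Nat.sub_le _ _).trans_lt j.isLt⟩) := by
  rw [Matrix.mul_apply]
  have step : ∀ l : Fin m, M i l * JBlock m ν l j =
      (if l = j then ν * M i j else 0) +
      (if _ : (j : ℕ) = 0 then 0 else
        if l = (⟨(j : ℕ) - 1, (Nat.sub_le _ _).trans_lt j.isLt⟩ : Fin m) then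
          M i ⟨(j : ℕ) - 1, (Nat.sub_le _ _).trans_lt j.isLt⟩ else 0) := by
    intro l
    simp only [JBlock, Matrix.of_apply, Fin.ext_iff]
    split_ifs <;>
      first
        | (exfalso; omega)
        | ring1
        | (obtain rfl : l = j := Fin.ext (by omega); ring1)
        | (rw [show l = (⟨(j : ℕ) - 1, (Nat.sub_le _ _).trans_lt j.isLt⟩ : Fin m) from
            Fin.ext (show (l : ℕ) = (j : ℕ) - 1 by omega)]; ring1)
  rw [Finset.sum_congr rfl (fun l _ => step l), Finset.sum_add_distrib,
    Finset.sum_ite_eq' _ j, if_pos (mem_univ _)]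
  congr 1
  split_ifs with h
  · simp
  · simp

open Finset in
lemma JBlockT_mul_apply {m : ℕ} (ν : ℂ) (M : Matrix (Fin m) (Fin m) ℂ) (i j : Fin m) :
    ((JBlock m ν)ᵀ * M) i j = ν * M i j +
      (if _ : (i : ℕ) = 0 then 0 else M ⟨(i : ℕ) - 1, (Nat.sub_le _ _).trans_lt i.isLt⟩ j) := by
  rw [Matrix.mul_apply]
  have step : ∀ k : Fin m, (JBlock m ν)ᵀ i k * M k j =
      (if k = i then ν * M i j else 0) +
      (if _ : (i : ℕ) = 0 then 0 else
        if k = (⟨(i : ℕ) - 1, (Nat.sub_le _ _).trans_lt i.isLt⟩ : Fin m) then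
          M ⟨(i : ℕ) - 1, (Nat.sub_le _ _).trans_lt i.isLt⟩ j else 0) := by
    intro k
    simp only [JBlock, Matrix.transpose_apply, Matrix.of_apply, Fin.ext_iff]
    split_ifs <;>
      first
        | (exfalso; omega)
        | ring1
        | (obtain rfl : k = i := Fin.ext (by omega); ring1)
        | (rw [show k = (⟨(i : ℕ) - 1, (Nat.sub_le _ _).trans_lt i.isLt⟩ : Fin m) from
            Fin.ext (show (k : ℕ) = (i : ℕ) - 1 by omega)]; ring1)
  rw [Finset.sum_congr rfl (fun k _ => step k), Finset.sum_add_distrib,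
    Finset.sum_ite_eq' _ i, if_pos (mem_univ _)]
  congr 1
  split_ifs with h
  · simp
  · simp

noncomputable def Pent (m : ℕ) (μ : ℂ) (i j : ℕ) : ℂ :=
  if m ≤ i + j + 1 then
    (-1) ^ i * μ ^ ((j : ℤ) + 1 - m - i) * ((i - 1).choose (i + j + 1 - m) : ℂ)
  else 0

noncomputable def Pm (m : ℕ) (μ : ℂ) : Matrix (Fin m) (Fin m) ℂ :=
  Matrix.of fun i j => Pent m μ (i : ℕ) (j : ℕ)

lemma Pent_eq_zero (m : ℕ) (μ : ℂ) (i j : ℕ) (h : i + j + 1 < m) : Pent m μ i j = 0 := by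
  rw [Pent, if_neg (by omega)]

lemma Pent_rec (m : ℕ) (μ : ℂ) (hμ : μ ≠ 0) (i j : ℕ) (him : i < m) (hjm : j < m)
    (hi : 1 ≤ i) (hj : 1 ≤ j) :
    μ * Pent m μ i (j - 1) + μ⁻¹ * Pent m μ (i - 1) j + Pent m μ (i - 1) (j - 1) = 0 := by
  rcases lt_trichotomy (i + j) m with hlt | heq | hgt
  · rw [Pent, if_neg (by omega), Pent, if_neg (by omega), Pent, if_neg (by omega)]
    ring
  · obtain ⟨i1, rfl⟩ : ∃ i1, i = i1 + 1 := ⟨i - 1, by omega⟩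
    rw [Pent, if_pos (by omega), Pent, if_pos (by omega), Pent, if_neg (by omega)]
    rw [show i1 + 1 + (j - 1) + 1 - m = 0 by omega, show i1 + 1 - 1 + j + 1 - m = 0 by omega]
    rw [show i1 + 1 - 1 = i1 by omega]
    rw [show ((j - 1 : ℕ) : ℤ) + 1 - (m : ℤ) - ((i1 + 1 : ℕ) : ℤ)
          = ((j : ℤ) + 1 - m - ((i1 + 1 : ℕ) : ℤ)) - 1 by omega,
      show ((j : ℤ) + 1 - (m : ℤ) - ((i1 : ℕ) : ℤ))
          = ((j : ℤ) + 1 - m - ((i1 + 1 : ℕ) : ℤ)) + 1 by push_cast; ring]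
    rw [zpow_sub_one₀ hμ, zpow_add_one₀ hμ]
    simp only [Nat.choose_zero_right, Nat.cast_one, pow_succ]
    field_simp
    ring
  · obtain ⟨i2, rfl⟩ : ∃ i2, i = i2 + 2 := ⟨i - 2, by omega⟩
    rw [Pent, if_pos (by omega), Pent, if_pos (by omega), Pent, if_pos (by omega)]
    rw [show i2 + 2 + (j - 1) + 1 - m = (i2 + 2 + j + 1 - m - 2) + 1 by omega,
      show i2 + 2 - 1 + j + 1 - m = (i2 + 2 + j + 1 - m - 2) + 1 by omega,
      show i2 + 2 - 1 + (j - 1) + 1 - m = (i2 + 2 + j + 1 - m - 2) by omega,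
      show i2 + 2 - 1 = i2 + 1 by omega,
      show i2 + 1 - 1 = i2 by omega]
    rw [show ((j - 1 : ℕ) : ℤ) + 1 - (m : ℤ) - ((i2 + 2 : ℕ) : ℤ)
          = ((j : ℤ) + 1 - m - ((i2 + 2 : ℕ) : ℤ)) - 1 by omega,
      show ((j : ℤ) + 1 - (m : ℤ) - ((i2 + 1 : ℕ) : ℤ))
          = ((j : ℤ) + 1 - m - ((i2 + 2 : ℕ) : ℤ)) + 1 by push_cast; ring,
      show ((j - 1 : ℕ) : ℤ) + 1 - (m : ℤ) - ((i2 + 1 : ℕ) : ℤ)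
          = ((j : ℤ) + 1 - m - ((i2 + 2 : ℕ) : ℤ)) by omega]
    rw [zpow_sub_one₀ hμ, zpow_add_one₀ hμ, Nat.choose_succ_succ]
    push_cast
    field_simp
    ring

lemma key_identity (m : ℕ) (μ : ℂ) (hμ : μ ≠ 0) :
    (JBlock m μ)ᵀ * Pm m μ * JBlock m μ⁻¹ = Pm m μ := by
  ext i j
  rw [mul_JBlock_apply, JBlockT_mul_apply]
  have hμμ : μ⁻¹ * μ = 1 := inv_mul_cancel₀ hμ
  by_cases hj : (j : ℕ) = 0
  · rw [dif_pos hj]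
    by_cases hi : (i : ℕ) = 0
    · rw [dif_pos hi]
      simp only [Pm, Matrix.of_apply]
      field_simp
      ring
    · rw [dif_neg hi]
      simp only [Pm, Matrix.of_apply]
      rw [Pent_eq_zero m μ ((i : ℕ) - 1) (j : ℕ) (by omega)]
      field_simp
      ring
  · rw [dif_neg hj, JBlockT_mul_apply]
    by_cases hi : (i : ℕ) = 0
    · rw [dif_pos hi, dif_pos hi]
      simp only [Pm, Matrix.of_apply]
      rw [Pent_eq_zero m μ (i : ℕ) ((j : ℕ) - 1) (by omega)]
      field_simp
      ring
    · rw [dif_neg hi, dif_neg hi]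
      simp only [Pm, Matrix.of_apply]
      have hrec := Pent_rec m μ hμ (i : ℕ) (j : ℕ) i.isLt j.isLt (by omega) (by omega)
      linear_combination hrec + Pent m μ (i : ℕ) (j : ℕ) * hμμ

lemma JBlock_det (m : ℕ) (μ : ℂ) : (JBlock m μ).det = μ ^ m := by
  have h : (JBlock m μ).BlockTriangular id := by
    intro i j hij
    simp only [id, Fin.lt_iff_val_lt_val] at hij
    simp only [JBlock, Matrix.of_apply]
    rw [if_neg (by intro h; rw [h] at hij; omega), if_neg (by omega)]
  rw [Matrix.det_of_upperTriangular h]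
  simp [JBlock]

lemma Pm_det_ne_zero (m : ℕ) (μ : ℂ) (hμ : μ ≠ 0) : (Pm m μ).det ≠ 0 := by
  have hQ : ((Pm m μ).submatrix Fin.revPerm id).det
      = Equiv.Perm.sign (Fin.revPerm : Equiv.Perm (Fin m)) * (Pm m μ).det :=
    Matrix.det_permute _ _
  have ht : ((Pm m μ).submatrix (Fin.revPerm : Equiv.Perm (Fin m)) id).BlockTriangular id := by
    intro i j hij
    simp only [id, Fin.lt_iff_val_lt_val] at hij
    simp only [Matrix.submatrix_apply, id_eq, Pm, Matrix.of_apply, Fin.revPerm_apply, Fin.val_rev]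
    exact Pent_eq_zero m μ _ _ (by omega)
  have hdiag : ∀ i : Fin m, ((Pm m μ).submatrix (Fin.revPerm : Equiv.Perm (Fin m)) id) i i ≠ 0 := by
    intro i
    simp only [Matrix.submatrix_apply, id_eq, Pm, Matrix.of_apply, Fin.revPerm_apply, Fin.val_rev]
    rw [Pent, if_pos (by omega), show m - ((i : ℕ) + 1) + (i : ℕ) + 1 - m = 0 by omega,
      Nat.choose_zero_right, Nat.cast_one, mul_one]
    exact mul_ne_zero (pow_ne_zero _ (by norm_num)) (zpow_ne_zero _ hμ)
  have hdet : ((Pm m μ).submatrix (Fin.revPerm : Equiv.Perm (Fin m)) id).det ≠ 0 := by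
    rw [Matrix.det_of_upperTriangular ht]
    exact Finset.prod_ne_zero_iff.2 fun i _ => hdiag i
  intro h0
  rw [h0, mul_zero] at hQ
  exact hdet hQ

/-- For `μ ≠ 0`, the cosquare of `H_{2m}(μ)` equals `J_m(μ) ⊕ J_m(μ)⁻ᵀ`, which is
similar to `J_m(μ) ⊕ J_m(μ⁻¹)`. -/
theorem cosquare_Hmat (m : ℕ) (hm : 0 < m) (μ : ℂ) (hμ : μ ≠ 0) :
    ((Hmat m μ)ᵀ)⁻¹ * Hmat m μ =
      Matrix.fromBlocks (JBlock m μ) 0 0 (((JBlock m μ)ᵀ)⁻¹) ∧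
    MatrixSimilar (Matrix.fromBlocks (JBlock m μ) 0 0 (((JBlock m μ)ᵀ)⁻¹))
      (Matrix.fromBlocks (JBlock m μ) 0 0 (JBlock m μ⁻¹)) := by
  have hJdet : IsUnit (JBlock m μ).det := by
    rw [JBlock_det]; exact isUnit_iff_ne_zero.2 (pow_ne_zero _ hμ)
  have hJTdet : IsUnit ((JBlock m μ)ᵀ).det := by rwa [Matrix.det_transpose]
  have hPdet : IsUnit (Pm m μ).det := isUnit_iff_ne_zero.2 (Pm_det_ne_zero m μ hμ)
  constructor
  · have hT : (Hmat m μ)ᵀ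
        = Matrix.fromBlocks 0 (JBlock m μ)ᵀ (1 : Matrix (Fin m) (Fin m) ℂ) 0 := by
      rw [Hmat, Matrix.fromBlocks_transpose]
      simp
    have hright : (Hmat m μ)ᵀ * Matrix.fromBlocks 0 1 (((JBlock m μ)ᵀ)⁻¹) 0 = 1 := by
      rw [hT, Matrix.fromBlocks_multiply]
      simp [Matrix.mul_nonsing_inv _ hJTdet, Matrix.fromBlocks_one]
    rw [Matrix.inv_eq_right_inv hright, Hmat, Matrix.fromBlocks_multiply]
    simp
  · have h3 : ((JBlock m μ)ᵀ)⁻¹ * Pm m μ = Pm m μ * JBlock m μ⁻¹ := by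
      conv_lhs => rw [← key_identity m μ hμ]
      rw [← Matrix.mul_assoc, ← Matrix.mul_assoc,
        Matrix.nonsing_inv_mul _ hJTdet, Matrix.one_mul]
    have h5 : (Pm m μ)⁻¹ * ((JBlock m μ)ᵀ)⁻¹ = JBlock m μ⁻¹ * (Pm m μ)⁻¹ := by
      have h4 := congrArg (fun M => (Pm m μ)⁻¹ * M * (Pm m μ)⁻¹) h3
      simp only [Matrix.mul_assoc] at h4
      rw [Matrix.nonsing_inv_mul_cancel_left _ _ hPdet] at h4
      rw [Matrix.mul_nonsing_inv _ hPdet] at h4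
      simpa [Matrix.mul_assoc, Matrix.mul_one] using h4
    have hSdet : IsUnit (Matrix.fromBlocks (1 : Matrix (Fin m) (Fin m) ℂ) 0 0 (Pm m μ)⁻¹).det := by
      rw [Matrix.det_fromBlocks_zero₂₁, Matrix.det_one, one_mul, Matrix.det_nonsing_inv,
        Ring.inverse_eq_inv]
      exact isUnit_iff_ne_zero.2 (inv_ne_zero (Pm_det_ne_zero m μ hμ))
    refine ⟨Matrix.fromBlocks 1 0 0 (Pm m μ)⁻¹, Matrix.isUnit_iff_isUnit_det _ |>.2 hSdet, ?_⟩
    have hSA : Matrix.fromBlocks (1 : Matrix (Fin m) (Fin m) ℂ) 0 0 (Pm m μ)⁻¹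
          * Matrix.fromBlocks (JBlock m μ) 0 0 (((JBlock m μ)ᵀ)⁻¹)
        = Matrix.fromBlocks (JBlock m μ) 0 0 (JBlock m μ⁻¹)
          * Matrix.fromBlocks (1 : Matrix (Fin m) (Fin m) ℂ) 0 0 (Pm m μ)⁻¹ := by
      rw [Matrix.fromBlocks_multiply, Matrix.fromBlocks_multiply]
      simp [h5]
    calc Matrix.fromBlocks (JBlock m μ) 0 0 (((JBlock m μ)ᵀ)⁻¹)
        = (Matrix.fromBlocks (1 : Matrix (Fin m) (Fin m) ℂ) 0 0 (Pm m μ)⁻¹)⁻¹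
            * (Matrix.fromBlocks (1 : Matrix (Fin m) (Fin m) ℂ) 0 0 (Pm m μ)⁻¹
              * Matrix.fromBlocks (JBlock m μ) 0 0 (((JBlock m μ)ᵀ)⁻¹)) :=
          (Matrix.nonsing_inv_mul_cancel_left _ _ hSdet).symm
      _ = (Matrix.fromBlocks (1 : Matrix (Fin m) (Fin m) ℂ) 0 0 (Pm m μ)⁻¹)⁻¹
            * Matrix.fromBlocks (JBlock m μ) 0 0 (JBlock m μ⁻¹)
            * Matrix.fromBlocks (1 : Matrix (Fin m) (Fin m) ℂ) 0 0 (Pm m μ)⁻¹ := by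
          rw [hSA, Matrix.mul_assoc]
end

section
/- For any positive integer m and complex μ ≠ 0, the *cosquare of H_{2m}(μ) equals J_m(μ) ⊕ J_m(μ)⁻*, which is similar to J_m(μ) ⊕ J_m(μ̄⁻¹). -/
open Matrix

def SimilarMat {m : Type*} [Fintype m] [DecidableEq m] (A B : Matrix m m ℂ) : Prop :=
  ∃ S : Matrix m m ℂ, IsUnit S ∧ A = S⁻¹ * B * S

noncomputable def Kmat (n : ℕ) (lam : ℂ) : Matrix (Fin n) (Fin n) ℂ :=
  Matrix.of fun i j => if (i : ℕ) ≤ (j : ℕ) then (-lam⁻¹) ^ ((j : ℕ) - (i : ℕ)) * lam⁻¹ else 0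

lemma JBlock_blockTriangular (n : ℕ) (μ : ℂ) : (JBlock n μ).BlockTriangular id := by
  intro i j hij
  simp only [JBlock, of_apply, id_eq] at *
  rw [if_neg, if_neg] <;> [skip; rintro rfl] <;> omega

lemma det_JBlock (n : ℕ) (μ : ℂ) : (JBlock n μ).det = μ ^ n := by
  rw [Matrix.det_of_upperTriangular (JBlock_blockTriangular n μ)]
  simp [JBlock]

lemma JBlock_mul_Kmat (n : ℕ) (lam : ℂ) (h : lam ≠ 0) : JBlock n lam * Kmat n lam = 1 := by
  ext i j
  rw [Matrix.mul_apply]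
  have key : ∀ k : Fin n, (JBlock n lam) i k * (Kmat n lam) k j =
      (if i = k then lam * Kmat n lam k j else 0) +
      (if (i : ℕ) + 1 = (k : ℕ) then Kmat n lam k j else 0) := by
    intro k
    simp only [JBlock, of_apply]
    by_cases h1 : i = k
    · subst h1
      rw [if_pos rfl, if_pos rfl, if_neg (by omega : ¬((i : ℕ) + 1 = (i : ℕ))), add_zero]
    · rw [if_neg h1, if_neg h1, zero_add]
      by_cases h2 : (i : ℕ) + 1 = (k : ℕ)
      · rw [if_pos h2, if_pos h2, one_mul]
      · rw [if_neg h2, if_neg h2, zero_mul]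
  rw [Finset.sum_congr rfl (fun k _ => key k), Finset.sum_add_distrib,
    Finset.sum_ite_eq Finset.univ i (fun k => lam * Kmat n lam k j)]
  simp only [Finset.mem_univ, if_true]
  by_cases hi : (i : ℕ) + 1 < n
  · have hsum : (∑ k : Fin n, if (i : ℕ) + 1 = (k : ℕ) then Kmat n lam k j else 0)
        = Kmat n lam ⟨(i : ℕ) + 1, hi⟩ j := by
      have hcond : ∀ k : Fin n, ((i : ℕ) + 1 = (k : ℕ)) ↔ k = ⟨(i : ℕ) + 1, hi⟩ := by
        intro k; constructor
        · intro hk; exact Fin.ext hk.symm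
        · rintro rfl; rfl
      simp only [hcond]
      rw [Finset.sum_ite_eq' Finset.univ _ (fun k => Kmat n lam k j)]
      simp
    rw [hsum]
    simp only [Kmat, of_apply, Matrix.one_apply]
    rcases lt_trichotomy (i : ℕ) (j : ℕ) with hij | hij | hij
    · rw [if_pos (by omega), if_pos (by omega), if_neg (by exact fun hh => by omega)]
      obtain ⟨d, hd⟩ : ∃ d, (j : ℕ) - (i : ℕ) = d + 1 := ⟨(j : ℕ) - i - 1, by omega⟩
      rw [hd]
      have hd2 : (j : ℕ) - ((i : ℕ) + 1) = d := by omega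
      rw [hd2, pow_succ]
      field_simp
      ring
    · rw [if_pos (by omega), if_neg (by omega), if_pos (Fin.ext hij)]
      have hz : (j : ℕ) - (i : ℕ) = 0 := by omega
      rw [hz, pow_zero, one_mul]
      field_simp
      norm_num
    · rw [if_neg (by omega), if_neg (by omega), if_neg (by exact fun hh => by omega)]
      ring
  · have hsum : (∑ k : Fin n, if (i : ℕ) + 1 = (k : ℕ) then Kmat n lam k j else 0) = 0 :=
      Finset.sum_eq_zero fun k _ => if_neg (by omega)
    rw [hsum, add_zero]
    have hij : (i : ℕ) = n - 1 := by omega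
    simp only [Kmat, of_apply, Matrix.one_apply]
    rcases eq_or_ne i j with rfl | hne
    · rw [if_pos rfl, if_pos le_rfl, Nat.sub_self, pow_zero, one_mul]
      field_simp
    · rw [if_neg hne, if_neg (by intro hh; exact hne (Fin.ext (by omega)))]
      ring

lemma inv_JBlock (n : ℕ) (lam : ℂ) (h : lam ≠ 0) : (JBlock n lam)⁻¹ = Kmat n lam :=
  Matrix.inv_eq_right_inv (JBlock_mul_Kmat n lam h)

/-! ### Reversal matrix -/

def Rmat (n : ℕ) : Matrix (Fin n) (Fin n) ℂ :=
  Matrix.of fun i j => if j = i.rev then 1 else 0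

lemma Rmat_mul_apply {n : ℕ} (A : Matrix (Fin n) (Fin n) ℂ) (i j : Fin n) :
    (Rmat n * A) i j = A i.rev j := by
  rw [Matrix.mul_apply]
  have : ∀ k : Fin n, (Rmat n) i k * A k j = if k = i.rev then A k j else 0 := by
    intro k; simp only [Rmat, of_apply]; split <;> simp
  rw [Finset.sum_congr rfl fun k _ => this k, Finset.sum_ite_eq' Finset.univ i.rev (fun k => A k j)]
  simp

lemma mul_Rmat_apply {n : ℕ} (A : Matrix (Fin n) (Fin n) ℂ) (i j : Fin n) :
    (A * Rmat n) i j = A i j.rev := by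
  rw [Matrix.mul_apply]
  have : ∀ k : Fin n, A i k * (Rmat n) k j = if k = j.rev then A i k else 0 := by
    intro k; simp only [Rmat, of_apply]
    have : (j = k.rev) ↔ (k = j.rev) := by
      constructor <;> (rintro rfl; rw [Fin.rev_rev])
    simp only [this]; split <;> simp
  rw [Finset.sum_congr rfl fun k _ => this k,
    Finset.sum_ite_eq' Finset.univ j.rev (fun k => A i k)]
  simp

lemma Rmat_mul_Rmat (n : ℕ) : Rmat n * Rmat n = 1 := by
  ext i j
  rw [Rmat_mul_apply]
  simp only [Rmat, of_apply, Matrix.one_apply]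
  have : (j = i.rev.rev) ↔ (i = j) := by rw [Fin.rev_rev]; exact eq_comm
  simp only [this]

lemma isUnit_Rmat (n : ℕ) : IsUnit (Rmat n) := by
  rw [Matrix.isUnit_iff_isUnit_det]
  exact Matrix.isUnit_det_of_right_inverse (Rmat_mul_Rmat n)

lemma conjTranspose_JBlock (n : ℕ) (μ : ℂ) :
    (JBlock n μ)ᴴ = Rmat n * JBlock n (starRingEnd ℂ μ) * Rmat n := by
  ext i j
  rw [mul_Rmat_apply, Rmat_mul_apply]
  simp only [conjTranspose_apply, JBlock, of_apply]
  have hi := i.isLt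
  have hj := j.isLt
  have h1 : (i.rev = j.rev) ↔ (j = i) := by rw [Fin.rev_inj]; exact eq_comm
  have h2 : ((i.rev : ℕ) + 1 = (j.rev : ℕ)) ↔ ((j : ℕ) + 1 = (i : ℕ)) := by
    rw [Fin.val_rev, Fin.val_rev]; omega
  simp only [h1, h2]
  split_ifs <;> simp

/-! ### The strictly upper part of the inverse Jordan block -/

noncomputable def Mm (n : ℕ) (lam : ℂ) : Matrix (Fin n) (Fin n) ℂ :=
  Matrix.of fun i j => if (i : ℕ) < (j : ℕ) then (-lam⁻¹) ^ ((j : ℕ) - (i : ℕ)) * lam⁻¹ else 0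

lemma Kmat_eq (n : ℕ) (lam : ℂ) : Kmat n lam = lam⁻¹ • (1 : Matrix (Fin n) (Fin n) ℂ) + Mm n lam := by
  ext i j
  simp only [Kmat, Mm, of_apply, Matrix.add_apply, Matrix.smul_apply, Matrix.one_apply,
    smul_eq_mul]
  rcases lt_trichotomy (i : ℕ) (j : ℕ) with hij | hij | hij
  · rw [if_pos (by omega), if_neg (fun hh => by omega : ¬ i = j), if_pos hij, mul_zero, zero_add]
  · rw [if_pos (by omega), if_pos (Fin.ext hij), if_neg (by omega), mul_one, add_zero,
      Nat.sub_eq_zero_of_le (by omega), pow_zero, one_mul]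
  · rw [if_neg (by omega), if_neg (fun hh => by omega : ¬ i = j), if_neg (by omega), mul_zero,
      add_zero]

def evec (n : ℕ) : Fin n → ℂ := fun i => if (i : ℕ) = n - 1 then 1 else 0

noncomputable def Svec (n : ℕ) (lam : ℂ) (k : ℕ) : Fin n → ℂ := (Mm n lam ^ k) *ᵥ evec n

lemma Svec_zero : Svec n lam 0 = evec n := by simp [Svec]

lemma Svec_succ (n : ℕ) (lam : ℂ) (k : ℕ) :
    Svec n lam (k + 1) = Mm n lam *ᵥ Svec n lam k := by
  rw [Svec, Svec, Matrix.mulVec_mulVec, ← pow_succ']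

lemma Svec_eq_zero (n : ℕ) (lam : ℂ) (k : ℕ) (i : Fin n) (h : n - 1 < (i : ℕ) + k) :
    Svec n lam k i = 0 := by
  induction k generalizing i with
  | zero =>
    have hi := i.isLt
    simp only [Svec, pow_zero, Matrix.one_mulVec, evec]
    rw [if_neg (by omega)]
  | succ k ih =>
    rw [Svec_succ, Matrix.mulVec, dotProduct]
    refine Finset.sum_eq_zero fun j _ => ?_
    by_cases hj : n - 1 < (j : ℕ) + k
    · rw [ih j hj, mul_zero]
    · have : ¬ (i : ℕ) < (j : ℕ) := by omega
      simp only [Mm, of_apply]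
      rw [if_neg this, zero_mul]

lemma Svec_diag (n : ℕ) (lam : ℂ) (k : ℕ) (i : Fin n) (h : (i : ℕ) + k = n - 1) :
    Svec n lam k i = (-(lam⁻¹ * lam⁻¹)) ^ k := by
  induction k generalizing i with
  | zero =>
    simp only [Svec, pow_zero, Matrix.one_mulVec, evec]
    rw [if_pos (by omega)]
  | succ k ih =>
    have hi := i.isLt
    have hlt : (i : ℕ) + 1 < n := by omega
    rw [Svec_succ, Matrix.mulVec, dotProduct]
    rw [Finset.sum_eq_single (⟨(i : ℕ) + 1, hlt⟩ : Fin n)]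
    · have h1 : Mm n lam i ⟨(i : ℕ) + 1, hlt⟩ = (-lam⁻¹) ^ 1 * lam⁻¹ := by
        simp only [Mm, of_apply]
        rw [if_pos (by simp), Nat.add_sub_cancel_left]
      rw [h1, ih ⟨(i : ℕ) + 1, hlt⟩ (by simp; omega)]
      rw [pow_one, pow_succ]
      ring
    · intro j _ hj
      by_cases hjk : n - 1 < (j : ℕ) + k
      · rw [Svec_eq_zero n lam k j hjk, mul_zero]
      · have : ¬ (i : ℕ) < (j : ℕ) := by
          have : (j : ℕ) ≠ (i : ℕ) + 1 := fun hh => hj (Fin.ext hh)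
          omega
        simp only [Mm, of_apply]
        rw [if_neg this, zero_mul]
    · intro hmem; exact absurd (Finset.mem_univ _) hmem

/-! ### The similarity matrix -/

noncomputable def Smat (n : ℕ) (lam : ℂ) : Matrix (Fin n) (Fin n) ℂ :=
  Matrix.of fun i j => Svec n lam (n - 1 - (j : ℕ)) i

lemma Smat_triangular (n : ℕ) (lam : ℂ) : (Smat n lam).BlockTriangular id := by
  intro i j hij
  simp only [id_eq] at hij
  have hj := j.isLt
  exact Svec_eq_zero n lam _ i (by omega)

lemma isUnit_Smat (n : ℕ) (lam : ℂ) (h : lam ≠ 0) : IsUnit (Smat n lam) := by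
  rw [Matrix.isUnit_iff_isUnit_det, Matrix.det_of_upperTriangular (Smat_triangular n lam)]
  rw [isUnit_iff_ne_zero]
  refine Finset.prod_ne_zero_iff.2 fun j _ => ?_
  have hj := j.isLt
  have : Smat n lam j j = (-(lam⁻¹ * lam⁻¹)) ^ (n - 1 - (j : ℕ)) :=
    Svec_diag n lam _ j (by omega)
  rw [this]
  exact pow_ne_zero _ (by simp [h])

lemma Mm_mul_Smat (n : ℕ) (hn : 0 < n) (lam : ℂ) :
    Mm n lam * Smat n lam = Smat n lam * JBlock n 0 := by
  ext i j
  have hj := j.isLt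
  have hLHS : (Mm n lam * Smat n lam) i j = Svec n lam (n - 1 - (j : ℕ) + 1) i := by
    rw [Svec_succ, Matrix.mulVec, dotProduct, Matrix.mul_apply]
    rfl
  rw [hLHS, Matrix.mul_apply]
  by_cases hj0 : (j : ℕ) = 0
  · have hz : ∀ k : Fin n, Smat n lam i k * JBlock n 0 k j = 0 := by
      intro k
      simp only [JBlock, of_apply]
      rcases eq_or_ne k j with rfl | hne
      · rw [if_pos rfl, mul_zero]
      · rw [if_neg hne, if_neg (by omega), mul_zero]
    rw [Finset.sum_eq_zero fun k _ => hz k]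
    exact Svec_eq_zero n lam _ i (by omega)
  · have hlt : (j : ℕ) - 1 < n := by omega
    rw [Finset.sum_eq_single (⟨(j : ℕ) - 1, hlt⟩ : Fin n)]
    · have h1 : JBlock n 0 ⟨(j : ℕ) - 1, hlt⟩ j = 1 := by
        simp only [JBlock, of_apply]
        rw [if_neg (by intro hh; apply_fun Fin.val at hh; simp at hh; omega),
          if_pos (show (j : ℕ) - 1 + 1 = (j : ℕ) by omega)]
      rw [h1, mul_one]
      simp only [Smat, of_apply]
      congr 1
      omega
    · intro k _ hk
      simp only [JBlock, of_apply]
      rcases eq_or_ne k j with rfl | hne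
      · rw [if_pos rfl, mul_zero]
      · rw [if_neg hne, if_neg (by intro hh; exact hk (Fin.ext (show (k : ℕ) = (j : ℕ) - 1 by omega))), mul_zero]
    · intro hmem; exact absurd (Finset.mem_univ _) hmem

lemma JBlock_split (n : ℕ) (c : ℂ) :
    JBlock n c = c • (1 : Matrix (Fin n) (Fin n) ℂ) + JBlock n 0 := by
  ext i j
  rcases eq_or_ne i j with rfl | hne
  · simp [JBlock, Matrix.one_apply]
  · simp [JBlock, Matrix.one_apply, hne]

lemma Kmat_mul_Smat (n : ℕ) (hn : 0 < n) (lam : ℂ) :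
    Kmat n lam * Smat n lam = Smat n lam * JBlock n lam⁻¹ := by
  rw [Kmat_eq, JBlock_split n lam⁻¹, add_mul, Matrix.mul_add, Matrix.smul_mul, Matrix.mul_smul,
    one_mul, mul_one, Mm_mul_Smat n hn lam]

lemma similar_of {k : Type*} [Fintype k] [DecidableEq k] {A B S : Matrix k k ℂ}
    (hS : IsUnit S) (h : A * S = S * B) : SimilarMat A B := by
  refine ⟨S⁻¹, Matrix.isUnit_nonsing_inv_iff.mpr hS, ?_⟩
  have hd : IsUnit S.det := (Matrix.isUnit_iff_isUnit_det S).mp hS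
  rw [Matrix.nonsing_inv_nonsing_inv S hd, ← h, Matrix.mul_assoc,
    Matrix.mul_nonsing_inv S hd, Matrix.mul_one]

lemma RAR_mul {n : ℕ} (A B : Matrix (Fin n) (Fin n) ℂ) :
    (Rmat n * A * Rmat n) * (Rmat n * B * Rmat n) = Rmat n * (A * B) * Rmat n := by
  calc (Rmat n * A * Rmat n) * (Rmat n * B * Rmat n)
      = Rmat n * (A * ((Rmat n * Rmat n) * (B * Rmat n))) := by simp only [Matrix.mul_assoc]
    _ = Rmat n * (A * B) * Rmat n := by
        rw [Rmat_mul_Rmat, one_mul]; simp only [Matrix.mul_assoc]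

lemma conjTranspose_JBlock_mul (n : ℕ) (μ : ℂ) (h : μ ≠ 0) :
    (JBlock n μ)ᴴ * (Rmat n * Kmat n (starRingEnd ℂ μ) * Rmat n) = 1 := by
  rw [conjTranspose_JBlock, RAR_mul,
    JBlock_mul_Kmat n (starRingEnd ℂ μ) (by simpa using h), mul_one, Rmat_mul_Rmat]

lemma conjTranspose_JBlock_inv (n : ℕ) (μ : ℂ) (h : μ ≠ 0) :
    ((JBlock n μ)ᴴ)⁻¹ = Rmat n * Kmat n (starRingEnd ℂ μ) * Rmat n :=
  Matrix.inv_eq_right_inv (conjTranspose_JBlock_mul n μ h)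

/-- For `μ ≠ 0`, the *cosquare of `H_{2m}(μ)` equals `J_m(μ) ⊕ J_m(μ)⁻*`, which is
similar to `J_m(μ) ⊕ J_m(μ̄⁻¹)`. -/
theorem starCosquare_Hmat (m : ℕ) (hm : 0 < m) (μ : ℂ) (hμ : μ ≠ 0) :
    ((Hmat m μ)ᴴ)⁻¹ * Hmat m μ =
      Matrix.fromBlocks (JBlock m μ) 0 0 (((JBlock m μ)ᴴ)⁻¹) ∧
    SimilarMat (Matrix.fromBlocks (JBlock m μ) 0 0 (((JBlock m μ)ᴴ)⁻¹))
      (Matrix.fromBlocks (JBlock m μ) 0 0 (JBlock m ((starRingEnd ℂ μ))⁻¹)) := by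
  set lb := starRingEnd ℂ μ with hlbdef
  have hlb : lb ≠ 0 := by simpa [hlbdef] using hμ
  have hJJ : (JBlock m μ)ᴴ * ((JBlock m μ)ᴴ)⁻¹ = 1 := by
    rw [conjTranspose_JBlock_inv m μ hμ]; exact conjTranspose_JBlock_mul m μ hμ
  constructor
  · have hH : (Hmat m μ)ᴴ = Matrix.fromBlocks 0 (JBlock m μ)ᴴ 1 0 := by
      rw [Hmat, Matrix.fromBlocks_conjTranspose]
      simp
    have hinv : ((Hmat m μ)ᴴ)⁻¹ = Matrix.fromBlocks 0 1 (((JBlock m μ)ᴴ)⁻¹) 0 := by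
      apply Matrix.inv_eq_right_inv
      rw [hH, Matrix.fromBlocks_multiply]
      simp [hJJ, Matrix.fromBlocks_one]
    rw [hinv, Hmat, Matrix.fromBlocks_multiply]
    simp
  · set T : Matrix (Fin m) (Fin m) ℂ := Rmat m * Smat m lb with hTdef
    have hT : IsUnit T := (isUnit_Rmat m).mul (isUnit_Smat m lb hlb)
    have hsim : ((JBlock m μ)ᴴ)⁻¹ * T = T * JBlock m lb⁻¹ := by
      rw [conjTranspose_JBlock_inv m μ hμ, hTdef]
      calc (Rmat m * Kmat m lb * Rmat m) * (Rmat m * Smat m lb)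
          = Rmat m * (Kmat m lb * ((Rmat m * Rmat m) * Smat m lb)) := by
            simp only [Matrix.mul_assoc]
        _ = Rmat m * (Kmat m lb * Smat m lb) := by rw [Rmat_mul_Rmat, one_mul]
        _ = Rmat m * (Smat m lb * JBlock m lb⁻¹) := by rw [Kmat_mul_Smat m hm lb]
        _ = Rmat m * Smat m lb * JBlock m lb⁻¹ := by simp only [Matrix.mul_assoc]
    have hU : IsUnit (Matrix.fromBlocks (1 : Matrix (Fin m) (Fin m) ℂ) 0 0 T) := by
      rw [Matrix.isUnit_iff_isUnit_det, Matrix.det_fromBlocks_zero₂₁, Matrix.det_one, one_mul]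
      exact (Matrix.isUnit_iff_isUnit_det T).mp hT
    apply similar_of hU
    rw [Matrix.fromBlocks_multiply, Matrix.fromBlocks_multiply]
    simp [hsim]
end

section
/- Let A be a nonsingular complex matrix whose *cosquare A⁻*A is diagonalizable with all eigenvalues of unit modulus. Then A is *congruent to a diagonal matrix whose diagonal entries all have unit modulus. In particular, if A⁻*A = λ²I for a unimodular λ, then λ̄A is Hermitian and A is *congruent to λI_{p} ⊕ (-λI_{q}) for uniquely determined nonnegative integers p, q with p + q = n. -/
open Matrix

def StarCongruent {m : Type*} [Fintype m] [DecidableEq m] (A B : Matrix m m ℂ) : Prop :=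
  ∃ S : Matrix m m ℂ, IsUnit S ∧ A = Sᴴ * B * S

lemma StarCongruent.trans {m : Type*} [Fintype m] [DecidableEq m]
    {A B C : Matrix m m ℂ} (h1 : StarCongruent A B) (h2 : StarCongruent B C) :
    StarCongruent A C := by
  obtain ⟨S, hS, rfl⟩ := h1
  obtain ⟨T, hT, rfl⟩ := h2
  exact ⟨T * S, hT.mul hS, by rw [conjTranspose_mul]; noncomm_ring⟩

lemma starCongruent_submatrix {m : Type*} [Fintype m] [DecidableEq m]
    (X : Matrix m m ℂ) (e : Equiv.Perm m) :
    StarCongruent (X.submatrix e e) X := by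
  refine ⟨(1 : Matrix m m ℂ).submatrix id e, ?_, ?_⟩
  · have h1 : ((1 : Matrix m m ℂ).submatrix (id : m → m) e) *
        ((1 : Matrix m m ℂ).submatrix e (id : m → m)) = 1 := by
      ext i j
      simp only [mul_apply, submatrix_apply, id_eq]
      rw [Finset.sum_eq_single (e.symm i)]
      · simp [one_apply, Equiv.eq_symm_apply, eq_comm]
      · intro t _ ht
        have : i ≠ e t := fun h => ht (by simp [h])
        simp [one_apply, this]
      · simp
    rw [Matrix.isUnit_iff_isUnit_det]
    have := congrArg Matrix.det h1
    rw [Matrix.det_mul, Matrix.det_one] at this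
    exact IsUnit.of_mul_eq_one _ this
  · have hPX : ((1 : Matrix m m ℂ).submatrix e (id : m → m)) * X = X.submatrix e id := by
      ext i t
      simp only [mul_apply, submatrix_apply, id_eq]
      rw [Finset.sum_eq_single (e i)]
      · simp [one_apply]
      · intro s _ hs
        simp [one_apply, Ne.symm hs]
      · simp
    have hXQ : (X.submatrix e (id : m → m)) * ((1 : Matrix m m ℂ).submatrix (id : m → m) e)
        = X.submatrix e e := by
      ext i j
      simp only [mul_apply, submatrix_apply, id_eq]
      rw [Finset.sum_eq_single (e j)]
      · simp [one_apply]
      · intro t _ ht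
        simp [one_apply, ht]
      · simp
    rw [conjTranspose_submatrix, conjTranspose_one, hPX, hXQ]

lemma starCongruent_diagonal_perm {m : Type*} [Fintype m] [DecidableEq m]
    (g : m → ℂ) (σ : Equiv.Perm m) :
    StarCongruent (Matrix.diagonal g) (Matrix.diagonal (g ∘ σ)) := by
  have h := starCongruent_submatrix (Matrix.diagonal (g ∘ σ)) σ.symm
  rwa [submatrix_diagonal_equiv, show (g ∘ σ) ∘ σ.symm = g from funext fun x => by simp] at h

/-- Simultaneous block diagonalization: a Hermitian matrix vanishing off the "blocks"
determined by `c` can be unitarily diagonalized by a block-structured unitary. -/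
lemma exists_blockUnitary {ι : Type*} [Fintype ι] [DecidableEq ι] (c : ι → ℂ)
    (H : Matrix ι ι ℂ) (hH : H.IsHermitian) (hblk : ∀ i j, c i ≠ c j → H i j = 0) :
    ∃ (U : Matrix ι ι ℂ) (Δ : ι → ℝ),
      U * Uᴴ = 1 ∧ Uᴴ * U = 1 ∧ (∀ i j, c i ≠ c j → U i j = 0) ∧
      H = U * Matrix.diagonal (fun i => (Δ i : ℂ)) * Uᴴ := by
  classical
  set κ := {z : ℂ // z ∈ Finset.univ.image c} with hκ
  set f : ι → κ := fun i => ⟨c i, Finset.mem_image_of_mem c (Finset.mem_univ i)⟩ with hf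
  have hfeq : ∀ i j, f i = f j ↔ c i = c j := fun i j => Subtype.ext_iff
  set mm : κ → Type _ := fun k => {i // f i = k} with hmm
  set e : (Σ k, mm k) ≃ ι := Equiv.sigmaFiberEquiv f with he
  set Hb : ∀ k, Matrix (mm k) (mm k) ℂ := fun k => Matrix.of fun a b => H a.1 b.1 with hHb
  have hHbh : ∀ k, (Hb k).IsHermitian := by
    intro k
    ext a b
    have := congrFun (congrFun hH a.1) b.1
    simpa [Matrix.conjTranspose_apply, hHb] using this
  set Ub : ∀ k, Matrix (mm k) (mm k) ℂ :=
    fun k => ((hHbh k).eigenvectorUnitary : Matrix (mm k) (mm k) ℂ) with hUb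
  have hUbu : ∀ k, Ub k * (Ub k)ᴴ = 1 ∧ (Ub k)ᴴ * Ub k = 1 := by
    intro k
    have h2 := (hHbh k).eigenvectorUnitary.2
    rw [Matrix.mem_unitaryGroup_iff] at h2
    have h2' := (hHbh k).eigenvectorUnitary.2
    rw [Matrix.mem_unitaryGroup_iff'] at h2'
    constructor
    · calc Ub k * (Ub k)ᴴ = Ub k * star (Ub k) := by rw [Matrix.star_eq_conjTranspose]
        _ = 1 := h2
    · calc (Ub k)ᴴ * Ub k = star (Ub k) * Ub k := by rw [Matrix.star_eq_conjTranspose]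
        _ = 1 := h2'
  have hspecb : ∀ k, Hb k = Ub k * Matrix.diagonal (fun a => ((hHbh k).eigenvalues a : ℂ))
      * (Ub k)ᴴ := by
    intro k
    have := (hHbh k).spectral_theorem
    exact this
  set U : Matrix ι ι ℂ := (blockDiagonal' Ub).submatrix e.symm e.symm with hU
  set Δ : ι → ℝ := fun i => (hHbh (f i)).eigenvalues ⟨i, rfl⟩ with hΔ
  have hesymm : ∀ i, e.symm i = ⟨f i, ⟨i, rfl⟩⟩ := fun i => rfl
  -- reassembly of block-vanishing matrices
  have reasm : ∀ (G : Matrix ι ι ℂ), (∀ i j, c i ≠ c j → G i j = 0) →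
      (blockDiagonal' (fun k => Matrix.of fun (a b : mm k) => G a.1 b.1)).submatrix
        e.symm e.symm = G := by
    intro G hG
    ext i j
    simp only [submatrix_apply, hesymm]
    rcases eq_or_ne (f i) (f j) with hfij | hfij
    · have hcij : c i = c j := (hfeq i j).mp hfij
      rw [Matrix.blockDiagonal'_apply]
      rw [dif_pos hfij]
      have castval : ∀ (k k' : κ) (h : k = k') (x : mm k),
          ((cast (congrArg mm h) x : mm k')).val = x.val := by
        rintro k k' rfl x; rfl
      simp only [Matrix.of_apply]
      rw [castval _ _ hfij.symm ⟨j, rfl⟩]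
    · rw [Matrix.blockDiagonal'_apply, dif_neg hfij]
      exact (hG i j ((hfeq i j).not.mp hfij)).symm
  refine ⟨U, Δ, ?_, ?_, ?_, ?_⟩
  · rw [hU, conjTranspose_submatrix, blockDiagonal'_conjTranspose,
      submatrix_mul_equiv, ← blockDiagonal'_mul]
    have : (fun k => Ub k * (Ub k)ᴴ) = fun k => (1 : Matrix (mm k) (mm k) ℂ) := by
      funext k; exact (hUbu k).1
    rw [this]
    rw [show blockDiagonal' (fun k => (1 : Matrix (mm k) (mm k) ℂ)) = (1 : Matrix (Σ k, mm k) (Σ k, mm k) ℂ) from blockDiagonal'_one, submatrix_one_equiv]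
  · rw [hU, conjTranspose_submatrix, blockDiagonal'_conjTranspose,
      submatrix_mul_equiv, ← blockDiagonal'_mul]
    have : (fun k => (Ub k)ᴴ * Ub k) = fun k => (1 : Matrix (mm k) (mm k) ℂ) := by
      funext k; exact (hUbu k).2
    rw [this]
    rw [show blockDiagonal' (fun k => (1 : Matrix (mm k) (mm k) ℂ)) = (1 : Matrix (Σ k, mm k) (Σ k, mm k) ℂ) from blockDiagonal'_one, submatrix_one_equiv]
  · intro i j hij
    rw [hU]
    simp only [submatrix_apply, hesymm]
    exact Matrix.blockDiagonal'_apply_ne _ _ _ ((hfeq i j).not.mpr hij)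
  · have hHre : H = (blockDiagonal' Hb).submatrix e.symm e.symm := (reasm H hblk).symm
    have hdiag : Matrix.diagonal (fun i => (Δ i : ℂ)) =
        (blockDiagonal' fun k => Matrix.diagonal
          (fun a : mm k => ((hHbh k).eigenvalues a : ℂ))).submatrix e.symm e.symm := by
      rw [blockDiagonal'_diagonal, submatrix_diagonal_equiv]
      rfl
    rw [hU, hdiag, conjTranspose_submatrix, blockDiagonal'_conjTranspose,
      submatrix_mul_equiv, submatrix_mul_equiv, ← blockDiagonal'_mul, ← blockDiagonal'_mul,
      hHre]
    exact congrArg (fun M : ∀ k, Matrix (mm k) (mm k) ℂ =>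
      (blockDiagonal' M).submatrix ⇑e.symm ⇑e.symm) (funext fun k => hspecb k)

lemma unimod_conj_mul {z : ℂ} (hz : ‖z‖ = 1) : (starRingEnd ℂ) z * z = 1 := by
  rw [mul_comm, Complex.mul_conj, Complex.normSq_eq_norm_sq, hz]
  norm_num

lemma core_exists {n : ℕ} (B : Matrix (Fin n) (Fin n) ℂ) (hB : IsUnit B)
    (D : Fin n → ℂ) (hD : ∀ i, ‖D i‖ = 1)
    (hrel : B = Bᴴ * Matrix.diagonal D) :
    ∃ d : Fin n → ℂ, (∀ i, ‖d i‖ = 1) ∧ StarCongruent B (Matrix.diagonal d) := by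
  have hDne : ∀ i, D i ≠ 0 := by
    intro i h
    have := hD i
    rw [h] at this
    simp at this
  have hrel' : Bᴴ = Matrix.diagonal (fun i => (starRingEnd ℂ) (D i)) * B := by
    conv_lhs => rw [hrel]
    rw [conjTranspose_mul, conjTranspose_conjTranspose, diagonal_conjTranspose]
    rfl
  have hB0 : ∀ i j, D i ≠ D j → B i j = 0 := by
    intro i j hij
    have hent : B i j = (starRingEnd ℂ) (D i) * B i j * D j := by
      conv_lhs => rw [hrel, hrel']
      rw [Matrix.mul_diagonal, Matrix.diagonal_mul]
    have ht : (starRingEnd ℂ) (D i) * D j ≠ 1 := by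
      intro h
      apply hij
      have h1 : (starRingEnd ℂ) (D i) * D i = 1 := unimod_conj_mul (hD i)
      have : (starRingEnd ℂ) (D i) ≠ 0 := by
        simp only [ne_eq, map_eq_zero]; exact hDne i
      exact (mul_left_cancel₀ this (h1.trans h.symm))
    have hz : B i j * (1 - (starRingEnd ℂ) (D i) * D j) = 0 := by linear_combination hent
    rcases mul_eq_zero.mp hz with h | h
    · exact h
    · exact absurd (by linear_combination -h) ht
  set e : Fin n → ℂ := fun i => Complex.exp (Complex.log (D i) * (1 / 2)) with he
  have he2 : ∀ i, e i * e i = D i := by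
    intro i
    show Complex.exp (Complex.log (D i) * (1 / 2)) * Complex.exp (Complex.log (D i) * (1 / 2))
        = D i
    rw [← Complex.exp_add,
      show Complex.log (D i) * (1 / 2) + Complex.log (D i) * (1 / 2) = Complex.log (D i) by ring,
      Complex.exp_log (hDne i)]
  have heabs : ∀ i, ‖e i‖ = 1 := by
    intro i
    show ‖Complex.exp (Complex.log (D i) * (1 / 2))‖ = 1
    rw [Complex.norm_exp]
    have : (Complex.log (D i) * (1 / 2)).re = 0 := by
      simp [Complex.mul_re, Complex.log_re, hD i]
    rw [this, Real.exp_zero]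
  have hestar : ∀ i, (starRingEnd ℂ) (e i) * e i = 1 := fun i => unimod_conj_mul (heabs i)
  have he_eqD : ∀ i j, D i = D j → e i = e j := fun i j h => by
    show Complex.exp (Complex.log (D i) * (1 / 2)) = Complex.exp (Complex.log (D j) * (1 / 2))
    rw [h]
  set H : Matrix (Fin n) (Fin n) ℂ :=
    Matrix.diagonal (fun i => (starRingEnd ℂ) (e i)) * B with hHdef
  have hHapp : ∀ i j, H i j = (starRingEnd ℂ) (e i) * B i j := fun i j => by
    rw [hHdef, Matrix.diagonal_mul]
  have hblkH : ∀ i j, D i ≠ D j → H i j = 0 := fun i j hij => by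
    rw [hHapp, hB0 i j hij, mul_zero]
  have hHherm : H.IsHermitian := by
    ext i j
    rw [Matrix.conjTranspose_apply, hHapp, hHapp]
    simp only [star_mul', Complex.star_def, Complex.conj_conj]
    have hBji : (starRingEnd ℂ) (B j i) = Bᴴ i j := rfl
    rw [hBji, hrel', Matrix.diagonal_mul]
    by_cases hij : D i = D j
    · have hee : e i = e j := he_eqD i j hij
      have : e j * (starRingEnd ℂ) (D i) = (starRingEnd ℂ) (e i) := by
        rw [hee, hij, ← he2 j, _root_.map_mul]
        calc e j * ((starRingEnd ℂ) (e j) * (starRingEnd ℂ) (e j))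
            = ((starRingEnd ℂ) (e j) * e j) * (starRingEnd ℂ) (e j) := by ring
          _ = (starRingEnd ℂ) (e j) := by rw [hestar j, one_mul]
      rw [← this]; ring
    · rw [hB0 i j hij]; ring
  obtain ⟨U, Δ, hU1, hU2, hU0, hspec⟩ := exists_blockUnitary D H hHherm hblkH
  have hUunit : IsUnit U := by
    rw [Matrix.isUnit_iff_isUnit_det]
    have := congrArg Matrix.det hU1
    rw [Matrix.det_mul, Matrix.det_one] at this
    exact IsUnit.of_mul_eq_one _ this
  have hBEH : B = Matrix.diagonal e * H := by
    rw [hHdef, ← mul_assoc, Matrix.diagonal_mul_diagonal]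
    have : (fun i => e i * (starRingEnd ℂ) (e i)) = fun _ => (1 : ℂ) := by
      funext i; rw [mul_comm]; exact hestar i
    rw [this, Matrix.diagonal_one, one_mul]
  have hcommU : Matrix.diagonal e * U = U * Matrix.diagonal e := by
    ext i j
    rw [Matrix.diagonal_mul, Matrix.mul_diagonal]
    by_cases hij : D i = D j
    · rw [he_eqD i j hij]; ring
    · rw [hU0 i j hij]; ring
  have hBfin : B = U * Matrix.diagonal (fun i => e i * (Δ i : ℂ)) * Uᴴ := by
    rw [hBEH, hspec, ← mul_assoc, ← mul_assoc, hcommU, mul_assoc U,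
      Matrix.diagonal_mul_diagonal]
  have hΔne : ∀ i, Δ i ≠ 0 := by
    intro i hzero
    have hdiagu : IsUnit (Matrix.diagonal (fun i => e i * (Δ i : ℂ))) := by
      have : Matrix.diagonal (fun i => e i * (Δ i : ℂ)) = Uᴴ * B * U := by
        rw [hBfin, ← mul_assoc, ← mul_assoc, hU2, one_mul, mul_assoc, hU2, mul_one]
      rw [this]
      exact ((hUunit.star.mul hB).mul hUunit)
    rw [Matrix.isUnit_iff_isUnit_det, Matrix.det_diagonal] at hdiagu
    have := hdiagu.ne_zero
    rw [Finset.prod_ne_zero_iff] at this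
    have h2 := this i (Finset.mem_univ i)
    rw [hzero] at h2
    simp at h2
  set r : Fin n → ℝ := fun i => Real.sqrt |Δ i| with hr
  set s : Fin n → ℝ := fun i => if 0 < Δ i then 1 else -1 with hs
  have hrpos : ∀ i, 0 < r i := fun i =>
    Real.sqrt_pos.mpr (abs_pos.mpr (hΔne i))
  have hdecomp : ∀ i, (Δ i : ℝ) = r i * s i * r i := by
    intro i
    have h1 : r i * r i = |Δ i| := Real.mul_self_sqrt (abs_nonneg _)
    show Δ i = r i * (if 0 < Δ i then (1:ℝ) else -1) * r i
    by_cases hpos : 0 < Δ i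
    · rw [if_pos hpos]
      rw [mul_comm (r i) 1, one_mul, h1, abs_of_pos hpos]
    · rw [if_neg hpos]
      push_neg at hpos
      have : Δ i < 0 := lt_of_le_of_ne hpos (hΔne i)
      rw [show r i * (-1 : ℝ) * r i = -(r i * r i) by ring, h1, abs_of_neg this, neg_neg]
  set d : Fin n → ℂ := fun i => e i * (s i : ℂ) with hd
  have hdabs : ∀ i, ‖d i‖ = 1 := by
    intro i
    show ‖e i * ((s i : ℝ) : ℂ)‖ = 1
    rw [norm_mul, heabs, one_mul, Complex.norm_real]
    show |if 0 < Δ i then (1:ℝ) else -1| = 1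
    by_cases hpos : 0 < Δ i <;> simp [hpos]
  set R : Matrix (Fin n) (Fin n) ℂ := Matrix.diagonal (fun i => (r i : ℂ)) with hR
  have hRH : Rᴴ = R := by
    rw [hR, diagonal_conjTranspose]
    exact congrArg Matrix.diagonal (funext fun i => Complex.conj_ofReal _)
  have hRunit : IsUnit R := by
    rw [Matrix.isUnit_iff_isUnit_det, hR, Matrix.det_diagonal]
    rw [isUnit_iff_ne_zero, Finset.prod_ne_zero_iff]
    intro i _
    exact_mod_cast (hrpos i).ne'
  have hmid : Matrix.diagonal (fun i => e i * (Δ i : ℂ)) = R * Matrix.diagonal d * R := by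
    rw [hR, hd, Matrix.diagonal_mul_diagonal, Matrix.diagonal_mul_diagonal]
    refine congrArg Matrix.diagonal (funext fun i => ?_)
    have h := hdecomp i
    calc e i * (Δ i : ℂ) = e i * ((r i * s i * r i : ℝ) : ℂ) := by rw [h]
      _ = (r i : ℂ) * (e i * (s i : ℂ)) * (r i : ℂ) := by push_cast; ring
  refine ⟨d, hdabs, R * Uᴴ, hRunit.mul hUunit.star, ?_⟩
  rw [conjTranspose_mul, conjTranspose_conjTranspose, hRH]
  rw [hBfin, hmid]
  noncomm_ring

lemma sylvester_le {n p p' : ℕ} (hp : p ≤ n) (hp' : p' ≤ n)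
    (R : Matrix (Fin n) (Fin n) ℂ) (hR : IsUnit R)
    (hcong : Matrix.diagonal (fun i : Fin n => if (i:ℕ) < p' then (1:ℂ) else -1)
      = Rᴴ * Matrix.diagonal (fun i : Fin n => if (i:ℕ) < p then (1:ℂ) else -1) * R) :
    p' ≤ p := by
  by_contra hlt
  push_neg at hlt
  -- extension by zero as a linear map
  set Ext : (Fin p' → ℂ) →ₗ[ℂ] (Fin n → ℂ) :=
    { toFun := fun x => fun i => if h : (i:ℕ) < p' then x ⟨i, h⟩ else 0
      map_add' := by
        intro x y; funext i; by_cases h : (i:ℕ) < p' <;> simp [h]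
      map_smul' := by
        intro c x; funext i; by_cases h : (i:ℕ) < p' <;> simp [h] } with hExt
  set φ : (Fin p' → ℂ) →ₗ[ℂ] (Fin p → ℂ) :=
    (LinearMap.funLeft ℂ ℂ (Fin.castLE hp)).comp (R.mulVecLin.comp Ext) with hφ
  have hninj : ¬ Function.Injective φ := by
    intro hinj
    have := LinearMap.finrank_le_finrank_of_injective hinj
    rw [Module.finrank_fintype_fun_eq_card, Module.finrank_fintype_fun_eq_card,
      Fintype.card_fin, Fintype.card_fin] at this
    omega
  rw [Function.not_injective_iff] at hninj
  obtain ⟨a, b, hab, hneq⟩ := hninj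
  set x := a - b with hx
  have hxne : x ≠ 0 := sub_ne_zero.mpr hneq
  have hφx : φ x = 0 := by rw [hx, map_sub, hab, sub_self]
  set v : Fin n → ℂ := Ext x with hv
  set y : Fin n → ℂ := R *ᵥ v with hy
  have hv_supp : ∀ i : Fin n, ¬((i:ℕ) < p') → v i = 0 := by
    intro i hi
    rw [hv]
    exact dif_neg hi
  have hv_wit : ∃ i : Fin n, v i ≠ 0 ∧ (i:ℕ) < p' := by
    obtain ⟨a0, ha0⟩ := Function.ne_iff.mp hxne
    refine ⟨⟨a0, lt_of_lt_of_le a0.isLt hp'⟩, ?_, a0.isLt⟩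
    have : v ⟨a0, lt_of_lt_of_le a0.isLt hp'⟩ = x a0 := by
      rw [hv]
      show (if h : (a0:ℕ) < p' then x ⟨a0, h⟩ else 0) = x a0
      rw [dif_pos a0.isLt]
    rw [this]
    simpa using ha0
  have hy0 : ∀ j : Fin n, (j:ℕ) < p → y j = 0 := by
    intro j hj
    have := congrFun hφx ⟨j, hj⟩
    simpa [hφ, hy, LinearMap.funLeft, Fin.castLE, Fin.ext_iff] using this
  -- the two quadratic form values agree
  have hq : star v ⬝ᵥ ((Matrix.diagonal fun i : Fin n => if (i:ℕ) < p' then (1:ℂ) else -1) *ᵥ v)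
      = star y ⬝ᵥ ((Matrix.diagonal fun i : Fin n => if (i:ℕ) < p then (1:ℂ) else -1) *ᵥ y) := by
    rw [hcong]
    rw [← Matrix.mulVec_mulVec, ← Matrix.mulVec_mulVec]
    rw [Matrix.dotProduct_mulVec (star v) Rᴴ, ← Matrix.star_mulVec, ← hy]
  set r1 : ℝ := ∑ i : Fin n, (if (i:ℕ) < p' then (1:ℝ) else -1) * Complex.normSq (v i) with hr1
  set r2 : ℝ := ∑ i : Fin n, (if (i:ℕ) < p then (1:ℝ) else -1) * Complex.normSq (y i) with hr2
  have hq1 : star v ⬝ᵥ ((Matrix.diagonal fun i : Fin n => if (i:ℕ) < p' then (1:ℂ) else -1) *ᵥ v)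
      = (r1 : ℂ) := by
    rw [hr1, dotProduct, Complex.ofReal_sum]
    refine Finset.sum_congr rfl fun i _ => ?_
    rw [Matrix.mulVec_diagonal]
    simp only [Pi.star_apply, Complex.star_def]
    by_cases h : (i:ℕ) < p' <;>
      simp only [h, if_true, if_false] <;>
      rw [Complex.ofReal_mul] <;>
      rw [Complex.normSq_eq_conj_mul_self] <;> push_cast <;> ring
  have hq2 : star y ⬝ᵥ ((Matrix.diagonal fun i : Fin n => if (i:ℕ) < p then (1:ℂ) else -1) *ᵥ y)
      = (r2 : ℂ) := by
    rw [hr2, dotProduct, Complex.ofReal_sum]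
    refine Finset.sum_congr rfl fun i _ => ?_
    rw [Matrix.mulVec_diagonal]
    simp only [Pi.star_apply, Complex.star_def]
    by_cases h : (i:ℕ) < p <;>
      simp only [h, if_true, if_false] <;>
      rw [Complex.ofReal_mul] <;>
      rw [Complex.normSq_eq_conj_mul_self] <;> push_cast <;> ring
  have hr12 : r1 = r2 := by
    have := hq1.symm.trans (hq.trans hq2)
    exact_mod_cast this
  have hr1pos : 0 < r1 := by
    rw [hr1]
    obtain ⟨i0, hi0ne, hi0lt⟩ := hv_wit
    refine Finset.sum_pos' (fun i _ => ?_) ⟨i0, Finset.mem_univ i0, ?_⟩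
    · by_cases h : (i:ℕ) < p'
      · simp only [h, if_true, one_mul]
        exact Complex.normSq_nonneg _
      · rw [hv_supp i h]
        simp
    · rw [if_pos hi0lt, one_mul]
      exact Complex.normSq_pos.mpr hi0ne
  have hr2nonpos : r2 ≤ 0 := by
    rw [hr2]
    refine Finset.sum_nonpos fun i _ => ?_
    by_cases h : (i:ℕ) < p
    · rw [hy0 i h]
      simp [h]
    · simp only [h, if_false, neg_one_mul, neg_nonpos]
      exact Complex.normSq_nonneg _
  linarith

lemma hermitian_starCongruent_signs {n : ℕ} (M : Matrix (Fin n) (Fin n) ℂ)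
    (hM : M.IsHermitian) (hMu : IsUnit M) :
    ∃ p q : ℕ, p + q = n ∧
      StarCongruent M (Matrix.diagonal fun i => if (i : ℕ) < p then (1:ℂ) else -1) := by
  classical
  set μ : Fin n → ℝ := hM.eigenvalues with hμ
  set V : Matrix (Fin n) (Fin n) ℂ := (hM.eigenvectorUnitary : Matrix (Fin n) (Fin n) ℂ) with hV
  have hspec : M = V * Matrix.diagonal (fun i => (μ i : ℂ)) * Vᴴ := by
    have := hM.spectral_theorem
    exact this
  have hVu : V * Vᴴ = 1 ∧ Vᴴ * V = 1 := by
    have h2 := hM.eigenvectorUnitary.2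
    rw [Matrix.mem_unitaryGroup_iff] at h2
    have h2' := hM.eigenvectorUnitary.2
    rw [Matrix.mem_unitaryGroup_iff'] at h2'
    constructor
    · calc V * Vᴴ = V * star V := by rw [Matrix.star_eq_conjTranspose]
        _ = 1 := h2
    · calc Vᴴ * V = star V * V := by rw [Matrix.star_eq_conjTranspose]
        _ = 1 := h2'
  have hVunit : IsUnit V := by
    rw [Matrix.isUnit_iff_isUnit_det]
    have := congrArg Matrix.det hVu.1
    rw [Matrix.det_mul, Matrix.det_one] at this
    exact IsUnit.of_mul_eq_one _ this
  have hμne : ∀ i, μ i ≠ 0 := by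
    intro i hzero
    have hdet := hM.det_eq_prod_eigenvalues
    rw [Matrix.isUnit_iff_isUnit_det] at hMu
    rw [hdet] at hMu
    have := hMu.ne_zero
    rw [Finset.prod_ne_zero_iff] at this
    have h2 := this i (Finset.mem_univ i)
    rw [hμ] at hzero
    rw [hzero] at h2
    simp at h2
  -- scale to ±1
  set r : Fin n → ℝ := fun i => Real.sqrt |μ i| with hr
  set g : Fin n → ℂ := fun i => if 0 < μ i then 1 else -1 with hg
  have hrpos : ∀ i, 0 < r i := fun i => Real.sqrt_pos.mpr (abs_pos.mpr (hμne i))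
  have hdecomp : ∀ i, (μ i : ℂ) = (r i : ℂ) * g i * (r i : ℂ) := by
    intro i
    have h1 : r i * r i = |μ i| := Real.mul_self_sqrt (abs_nonneg _)
    show (μ i : ℂ) = (r i : ℂ) * (if 0 < μ i then (1:ℂ) else -1) * (r i : ℂ)
    by_cases hpos : 0 < μ i
    · rw [if_pos hpos]
      have : μ i = r i * r i := by rw [h1, abs_of_pos hpos]
      rw [this]; push_cast; ring
    · rw [if_neg hpos]
      have hneg : μ i < 0 := lt_of_le_of_ne (not_lt.mp hpos) (hμne i)
      have : μ i = -(r i * r i) := by rw [h1, abs_of_neg hneg]; ring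
      rw [this]; push_cast; ring
  set R : Matrix (Fin n) (Fin n) ℂ := Matrix.diagonal (fun i => (r i : ℂ)) with hR
  have hRH : Rᴴ = R := by
    rw [hR, diagonal_conjTranspose]
    exact congrArg Matrix.diagonal (funext fun i => Complex.conj_ofReal _)
  have hRunit : IsUnit R := by
    rw [Matrix.isUnit_iff_isUnit_det, hR, Matrix.det_diagonal,
      isUnit_iff_ne_zero, Finset.prod_ne_zero_iff]
    intro i _
    exact_mod_cast (hrpos i).ne'
  have hmid : Matrix.diagonal (fun i => (μ i : ℂ)) = R * Matrix.diagonal g * R := by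
    rw [hR, Matrix.diagonal_mul_diagonal, Matrix.diagonal_mul_diagonal]
    exact congrArg Matrix.diagonal (funext fun i => hdecomp i)
  have hcong1 : StarCongruent M (Matrix.diagonal g) := by
    refine ⟨R * Vᴴ, hRunit.mul hVunit.star, ?_⟩
    rw [conjTranspose_mul, conjTranspose_conjTranspose, hRH, hspec, hmid]
    noncomm_ring
  -- sort the signs
  set p : ℕ := (Finset.univ.filter (fun i : Fin n => 0 < μ i)).card with hp
  have hple : p ≤ n := le_trans (Finset.card_filter_le _ _) (by simp)
  refine ⟨p, n - p, Nat.add_sub_cancel' hple, ?_⟩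
  have hPcard : Fintype.card {i : Fin n // 0 < μ i} = p := by
    rw [hp, Fintype.card_subtype]
  have hNcard : Fintype.card {i : Fin n // ¬ 0 < μ i} = n - p := by
    rw [Fintype.card_subtype_compl, hPcard, Fintype.card_fin]
  set eP : Fin p ≃ {i : Fin n // 0 < μ i} := (Fintype.equivFinOfCardEq hPcard).symm with heP
  set eN : Fin (n - p) ≃ {i : Fin n // ¬ 0 < μ i} := (Fintype.equivFinOfCardEq hNcard).symm
    with heN
  set σ : Equiv.Perm (Fin n) :=
    ((finCongr (Nat.add_sub_cancel' hple).symm).trans finSumFinEquiv.symm).trans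
      ((eP.sumCongr eN).trans (Equiv.sumCompl (fun i : Fin n => 0 < μ i))) with hσ
  have hσprop : ∀ i : Fin n, (0 < μ (σ i)) ↔ (i : ℕ) < p := by
    intro i
    rw [hσ]
    simp only [Equiv.trans_apply]
    rcases hsum : finSumFinEquiv.symm (finCongr (Nat.add_sub_cancel' hple).symm i) with a | b
    · have hival : (i : ℕ) = (a : ℕ) := by
        have := congrArg finSumFinEquiv hsum
        rw [Equiv.apply_symm_apply] at this
        have hval := congrArg Fin.val this
        simpa using hval
      simp only [hsum, Equiv.sumCongr_apply, Sum.map_inl, Equiv.sumCompl_apply_inl]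
      constructor
      · intro _; rw [hival]; exact a.isLt
      · intro _; exact (eP a).2
    · have hival : (i : ℕ) = p + (b : ℕ) := by
        have := congrArg finSumFinEquiv hsum
        rw [Equiv.apply_symm_apply] at this
        have hval := congrArg Fin.val this
        simpa using hval
      simp only [hsum, Equiv.sumCongr_apply, Sum.map_inr, Equiv.sumCompl_apply_inr]
      constructor
      · intro hc; exact absurd hc (eN b).2
      · intro hc; omega
  have hsorted : g ∘ σ = fun i : Fin n => if (i : ℕ) < p then (1:ℂ) else -1 := by
    funext i
    show (if 0 < μ (σ i) then (1:ℂ) else -1) = if (i : ℕ) < p then (1:ℂ) else -1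
    by_cases hc : (i : ℕ) < p
    · rw [if_pos ((hσprop i).mpr hc), if_pos hc]
    · rw [if_neg (fun hx => hc ((hσprop i).mp hx)), if_neg hc]
  have := hcong1.trans (starCongruent_diagonal_perm g σ)
  rwa [hsorted] at this

lemma smul_conj_diag {n : ℕ} {lam : ℂ} (hl : ‖lam‖ = 1) (k : ℕ) :
    (starRingEnd ℂ) lam • (Matrix.diagonal fun i : Fin n => if (i:ℕ) < k then lam else -lam)
      = Matrix.diagonal (fun i : Fin n => if (i:ℕ) < k then (1:ℂ) else -1) := by
  rw [← Matrix.diagonal_smul]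
  refine congrArg Matrix.diagonal (funext fun i => ?_)
  have h1 : (starRingEnd ℂ) lam * lam = 1 := unimod_conj_mul hl
  by_cases h : (i:ℕ) < k <;> simp only [Pi.smul_apply, smul_eq_mul, h, if_true, if_false]
  · exact h1
  · rw [mul_neg, h1]

lemma conv_cong {n : ℕ} {lam : ℂ} (hl : ‖lam‖ = 1)
    {A : Matrix (Fin n) (Fin n) ℂ} {k : ℕ} {S : Matrix (Fin n) (Fin n) ℂ}
    (hS : A = Sᴴ * (Matrix.diagonal fun i : Fin n => if (i:ℕ) < k then lam else -lam) * S) :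
    (starRingEnd ℂ) lam • A
      = Sᴴ * (Matrix.diagonal fun i : Fin n => if (i:ℕ) < k then (1:ℂ) else -1) * S := by
  rw [hS, ← smul_conj_diag hl k, Matrix.mul_smul, Matrix.smul_mul]

lemma signs_unique {n : ℕ} {lam : ℂ} (hl : ‖lam‖ = 1)
    {A : Matrix (Fin n) (Fin n) ℂ} {p q p' q' : ℕ} (hpq : p + q = n) (hpq' : p' + q' = n)
    (h1 : StarCongruent A (Matrix.diagonal fun i : Fin n => if (i:ℕ) < p then lam else -lam))
    (h2 : StarCongruent A (Matrix.diagonal fun i : Fin n => if (i:ℕ) < p' then lam else -lam)) :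
    p' = p ∧ q' = q := by
  obtain ⟨S, hSu, hS⟩ := h1
  obtain ⟨T, hTu, hT⟩ := h2
  have hS' := conv_cong hl hS
  have hT' := conv_cong hl hT
  have key : ∀ (a b : ℕ) (X Y : Matrix (Fin n) (Fin n) ℂ), IsUnit X → IsUnit Y →
      (starRingEnd ℂ) lam • A = Xᴴ * (Matrix.diagonal fun i : Fin n =>
        if (i:ℕ) < a then (1:ℂ) else -1) * X →
      (starRingEnd ℂ) lam • A = Yᴴ * (Matrix.diagonal fun i : Fin n =>
        if (i:ℕ) < b then (1:ℂ) else -1) * Y →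
      a ≤ n → b ≤ n → b ≤ a := by
    intro a b X Y hXu hYu hX hY ha hb
    have hYdet : IsUnit Y.det := (Matrix.isUnit_iff_isUnit_det _).mp hYu
    have hR : IsUnit (X * Y⁻¹) := hXu.mul (Matrix.isUnit_nonsing_inv_iff.mpr hYu)
    refine sylvester_le ha hb (X * Y⁻¹) hR ?_
    rw [conjTranspose_mul, Matrix.conjTranspose_nonsing_inv]
    have heq : Xᴴ * (Matrix.diagonal fun i : Fin n => if (i:ℕ) < a then (1:ℂ) else -1) * X
        = Yᴴ * (Matrix.diagonal fun i : Fin n => if (i:ℕ) < b then (1:ℂ) else -1) * Y :=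
      hX.symm.trans hY
    have hYH : IsUnit Yᴴ := by rwa [Matrix.isUnit_conjTranspose]
    calc Matrix.diagonal (fun i : Fin n => if (i:ℕ) < b then (1:ℂ) else -1)
        = (Yᴴ)⁻¹ * (Yᴴ * (Matrix.diagonal fun i : Fin n => if (i:ℕ) < b then (1:ℂ) else -1) * Y)
          * Y⁻¹ := by
          rw [← mul_assoc, ← mul_assoc, Matrix.nonsing_inv_mul _
            ((Matrix.isUnit_iff_isUnit_det _).mp hYH), one_mul, mul_assoc _ Y,
            Matrix.mul_nonsing_inv _ hYdet, mul_one]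
      _ = (Yᴴ)⁻¹ * (Xᴴ * (Matrix.diagonal fun i : Fin n => if (i:ℕ) < a then (1:ℂ) else -1) * X)
          * Y⁻¹ := by rw [heq]
      _ = (Yᴴ)⁻¹ * Xᴴ * (Matrix.diagonal fun i : Fin n => if (i:ℕ) < a then (1:ℂ) else -1)
          * (X * Y⁻¹) := by noncomm_ring
  have hba : p' ≤ p := key p p' S T hSu hTu hS' hT' (by omega) (by omega)
  have hab : p ≤ p' := key p' p T S hTu hSu hT' hS' (by omega) (by omega)
  constructor
  · omega
  · omega

/-- If `A` is nonsingular and its *cosquare is diagonalizable with all eigenvalues of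
unit modulus, then `A` is *congruent to a diagonal matrix with unimodular diagonal
entries.  In particular, if `A⁻*A = λ²I` with `|λ| = 1`, then `λ̄A` is Hermitian and
`A` is *congruent to `λI_p ⊕ (-λI_q)` for uniquely determined `p, q` with `p + q = n`. -/
theorem starCongruent_diagonal_of_diagonalizable_unimodular {n : ℕ}
    (A : Matrix (Fin n) (Fin n) ℂ) (hA : IsUnit A)
    (h : ∃ D : Fin n → ℂ, (∀ i, ‖D i‖ = 1) ∧
      MatSimilar ((Aᴴ)⁻¹ * A) (Matrix.diagonal D)) :
    (∃ d : Fin n → ℂ, (∀ i, ‖d i‖ = 1) ∧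
      StarCongruent A (Matrix.diagonal d)) ∧
    ∀ lam : ℂ, ‖lam‖ = 1 → (Aᴴ)⁻¹ * A = lam ^ 2 • (1 : Matrix (Fin n) (Fin n) ℂ) →
      ((starRingEnd ℂ lam • A).IsHermitian ∧
        ∃ p q : ℕ, p + q = n ∧
          StarCongruent A
            (Matrix.diagonal fun i => if (i : ℕ) < p then lam else -lam) ∧
          ∀ p' q' : ℕ, p' + q' = n →
            StarCongruent A
              (Matrix.diagonal fun i => if (i : ℕ) < p' then lam else -lam) →
            p' = p ∧ q' = q) := by
  have hAdet : IsUnit A.det := (Matrix.isUnit_iff_isUnit_det _).mp hA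
  have hAH : IsUnit Aᴴ := (Matrix.isUnit_conjTranspose _).mpr hA
  have hAHdet : IsUnit (Aᴴ).det := (Matrix.isUnit_iff_isUnit_det _).mp hAH
  constructor
  · obtain ⟨D, hD, S, hSu, hsim⟩ := h
    have hSdet : IsUnit S.det := (Matrix.isUnit_iff_isUnit_det _).mp hSu
    have hArel : A = Aᴴ * (S⁻¹ * Matrix.diagonal D * S) := by
      have h2 := congrArg (fun X => Aᴴ * X) hsim
      rwa [← mul_assoc, Matrix.mul_nonsing_inv _ hAHdet, one_mul] at h2
    set B : Matrix (Fin n) (Fin n) ℂ := (S⁻¹)ᴴ * A * S⁻¹ with hB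
    have hSinvu : IsUnit S⁻¹ := Matrix.isUnit_nonsing_inv_iff.mpr hSu
    have hSinvHu : IsUnit (S⁻¹)ᴴ := (Matrix.isUnit_conjTranspose _).mpr hSinvu
    have hBu : IsUnit B := (hSinvHu.mul hA).mul hSinvu
    have hBrel : B = Bᴴ * Matrix.diagonal D := by
      have hBH : Bᴴ = (S⁻¹)ᴴ * Aᴴ * S⁻¹ := by
        rw [hB, conjTranspose_mul, conjTranspose_mul, conjTranspose_conjTranspose]
        noncomm_ring
      have hcanc : S⁻¹ * Matrix.diagonal D * S * S⁻¹ = S⁻¹ * Matrix.diagonal D := by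
        rw [mul_assoc, Matrix.mul_nonsing_inv _ hSdet, mul_one]
      rw [hBH, hB]
      conv_lhs => rw [hArel]
      calc (S⁻¹)ᴴ * (Aᴴ * (S⁻¹ * Matrix.diagonal D * S)) * S⁻¹
          = (S⁻¹)ᴴ * Aᴴ * (S⁻¹ * Matrix.diagonal D * S * S⁻¹) := by noncomm_ring
        _ = (S⁻¹)ᴴ * Aᴴ * (S⁻¹ * Matrix.diagonal D) := by rw [hcanc]
        _ = (S⁻¹)ᴴ * Aᴴ * S⁻¹ * Matrix.diagonal D := by noncomm_ring
    obtain ⟨d, hd, T, hTu, hTe⟩ := core_exists B hBu D hD hBrel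
    have hASB : A = Sᴴ * B * S := by
      have h1 : Sᴴ * (S⁻¹)ᴴ = 1 := by
        rw [← conjTranspose_mul, Matrix.nonsing_inv_mul _ hSdet, conjTranspose_one]
      calc A = (Sᴴ * (S⁻¹)ᴴ) * A * (S⁻¹ * S) := by
            rw [h1, Matrix.nonsing_inv_mul _ hSdet, one_mul, mul_one]
        _ = Sᴴ * ((S⁻¹)ᴴ * A * S⁻¹) * S := by noncomm_ring
        _ = Sᴴ * B * S := by rw [hB]
    exact ⟨d, hd, T * S, hTu.mul hSu, by rw [hASB, hTe, conjTranspose_mul]; noncomm_ring⟩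
  · intro lam hlam hcos
    have hlamne : lam ≠ 0 := by
      intro h0; rw [h0] at hlam; simp at hlam
    have hconj : (starRingEnd ℂ) lam * lam = 1 := unimod_conj_mul hlam
    have hA2 : A = lam ^ 2 • Aᴴ := by
      have h2 := congrArg (fun X => Aᴴ * X) hcos
      rw [← mul_assoc, Matrix.mul_nonsing_inv _ hAHdet, one_mul] at h2
      conv_lhs => rw [h2]
      rw [Matrix.mul_smul, mul_one]
    set M : Matrix (Fin n) (Fin n) ℂ := (starRingEnd ℂ) lam • A with hM
    have hMherm : M.IsHermitian := by
      show Mᴴ = M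
      rw [hM, Matrix.conjTranspose_smul]
      conv_rhs => rw [hA2]
      rw [smul_smul]
      have h3 : (starRingEnd ℂ) lam * lam ^ 2 = lam := by
        calc (starRingEnd ℂ) lam * lam ^ 2 = ((starRingEnd ℂ) lam * lam) * lam := by ring
          _ = lam := by rw [hconj, one_mul]
      rw [h3]
      congr 1
      simp [Complex.star_def]
    have hMu : IsUnit M := by
      rw [Matrix.isUnit_iff_isUnit_det, hM, Matrix.det_smul, isUnit_iff_ne_zero]
      exact mul_ne_zero (pow_ne_zero _ (by simpa using hlamne)) hAdet.ne_zero
    refine ⟨hMherm, ?_⟩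
    obtain ⟨p, q, hpq, hcongM⟩ := hermitian_starCongruent_signs M hMherm hMu
    have hAM : A = lam • M := by
      rw [hM, smul_smul, mul_comm, hconj, one_smul]
    obtain ⟨S, hSu, hSe⟩ := hcongM
    have hlsmul : lam • (Matrix.diagonal fun i : Fin n => if (i:ℕ) < p then (1:ℂ) else -1)
        = Matrix.diagonal (fun i : Fin n => if (i:ℕ) < p then lam else -lam) := by
      rw [← Matrix.diagonal_smul]
      refine congrArg Matrix.diagonal (funext fun i => ?_)
      by_cases hc : (i:ℕ) < p <;> simp [hc]
    have hexist : StarCongruent A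
        (Matrix.diagonal fun i : Fin n => if (i:ℕ) < p then lam else -lam) := by
      refine ⟨S, hSu, ?_⟩
      rw [hAM, hSe, ← hlsmul, Matrix.mul_smul, Matrix.smul_mul]
    refine ⟨p, q, hpq, hexist, fun p' q' hpq' hcong' => signs_unique hlam hpq hpq' hexist hcong'⟩
end

section
/- Let λ be a unimodular complex number with λ² ≠ -1, write λ = a + ib with a = Re λ ≠ 0, and let A = [[0, λ/a],[λ/a, i]]. Then the *cosquare of A is similar to J₂(λ²), and A is *congruent to λΔ₂ if a > 0, and to -λΔ₂ if a < 0. -/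
open Matrix Complex

set_option maxHeartbeats 1600000 in
/-- For unimodular `λ` with `λ² ≠ -1` and `a = Re λ` (so `a ≠ 0`), the matrix
`A = [[0, λ/a],[λ/a, i]]` has *cosquare similar to `J₂(λ²)`, and `A` is *congruent to
`λΔ₂` if `a > 0` and to `-λΔ₂` if `a < 0` (where `Δ₂ = [[0,1],[1,i]]`). -/
theorem example3 (lam : ℂ) (hlam : ‖lam‖ = 1) (h2 : lam ^ 2 ≠ -1) :
    lam.re ≠ 0 ∧
    MatSimilar (((!![0, lam / (lam.re : ℂ); lam / (lam.re : ℂ), I] :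
        Matrix (Fin 2) (Fin 2) ℂ)ᴴ)⁻¹ * !![0, lam / (lam.re : ℂ); lam / (lam.re : ℂ), I])
      (JBlock 2 (lam ^ 2)) ∧
    (0 < lam.re →
      StarCongruent (!![0, lam / (lam.re : ℂ); lam / (lam.re : ℂ), I] :
        Matrix (Fin 2) (Fin 2) ℂ) (lam • !![0, 1; 1, I])) ∧
    (lam.re < 0 →
      StarCongruent (!![0, lam / (lam.re : ℂ); lam / (lam.re : ℂ), I] :
        Matrix (Fin 2) (Fin 2) ℂ) (-(lam • !![0, 1; 1, I]))) := by
  -- basic facts from unimodularity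
  have h1 : Complex.normSq lam = 1 := by rw [← Complex.sq_norm, hlam]; norm_num
  have hnorm : lam.re * lam.re + lam.im * lam.im = 1 := by
    rw [Complex.normSq_apply] at h1; exact h1
  have hre : lam.re ≠ 0 := by
    intro h
    apply h2
    rw [Complex.ext_iff]
    constructor <;> simp [pow_two, Complex.mul_re, Complex.mul_im, h] <;> nlinarith
  have hn : ((lam.re:ℂ))^2 + ((lam.im:ℂ))^2 = 1 := by
    have : ((lam.re * lam.re + lam.im * lam.im : ℝ) : ℂ) = ((1:ℝ):ℂ) := by rw [hnorm]
    push_cast at this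
    linear_combination this
  have hu : lam * ((lam.re:ℂ) - (lam.im:ℂ)*I) = 1 := by
    rw [Complex.ext_iff]
    constructor <;> simp [Complex.mul_re, Complex.mul_im] <;> nlinarith
  have ha : (lam.re:ℂ) ≠ 0 := Complex.ofReal_ne_zero.mpr hre
  have hlam0 : lam ≠ 0 := by intro h; rw [h] at hu; simp at hu
  have hconj : (starRingEnd ℂ) lam = (lam.re:ℂ) - (lam.im:ℂ)*I := by
    rw [Complex.ext_iff]; constructor <;> simp
  have hl : (lam.re:ℂ) + (lam.im:ℂ)*I = lam := Complex.re_add_im lam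
  refine ⟨hre, ?_, ?_, ?_⟩
  · -- Similarity of the *cosquare to J₂(λ²)
    set A : Matrix (Fin 2) (Fin 2) ℂ := !![0, lam / (lam.re:ℂ); lam / (lam.re:ℂ), I] with hA
    set C : Matrix (Fin 2) (Fin 2) ℂ := !![lam^2, 2*(lam.re:ℂ)^2*lam^2*I; 0, lam^2] with hC
    set S : Matrix (Fin 2) (Fin 2) ℂ := !![1, 0; 0, 2*(lam.re:ℂ)^2*lam^2*I] with hS
    have hSu : IsUnit S := by
      rw [Matrix.isUnit_iff_isUnit_det, isUnit_iff_ne_zero]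
      simp [hS, Matrix.det_fin_two_of, ha, hlam0, I_ne_zero, pow_eq_zero_iff]
    have hdetA : A.det ≠ 0 := by
      simp only [hA, Matrix.det_fin_two_of]
      intro h
      have h0 : lam / (lam.re:ℂ) = 0 := mul_self_eq_zero.mp (by linear_combination -h)
      rw [div_eq_zero_iff] at h0
      tauto
    have hdetAH : (Aᴴ).det ≠ 0 := by rw [Matrix.det_conjTranspose]; simpa using hdetA
    have : Invertible Aᴴ := (Aᴴ).invertibleOfIsUnitDet (isUnit_iff_ne_zero.mpr hdetAH)
    refine ⟨S, hSu, ?_⟩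
    have hJ : JBlock 2 (lam^2) = !![lam^2, 1; 0, lam^2] := by
      ext i j; fin_cases i <;> fin_cases j <;> simp [JBlock]
    rw [hJ]
    have h1 : (Aᴴ)⁻¹ * A = C := by
      rw [Matrix.inv_mul_eq_iff_eq_mul_of_invertible]
      rw [hA, hC]
      ext i j
      fin_cases i <;> fin_cases j <;>
        simp only [Matrix.mul_apply, Fin.sum_univ_two, Matrix.conjTranspose_apply,
          Matrix.cons_val', Matrix.cons_val_zero, Matrix.cons_val_one, Matrix.head_cons,
          Matrix.empty_val', Matrix.cons_val_fin_one, Matrix.head_fin_const, Matrix.of_apply,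
          Fin.zero_eta, Fin.mk_one, Complex.star_def, star_zero,
          map_div₀, Complex.conj_ofReal, map_zero, Complex.conj_I]
      · simp
      · field_simp; linear_combination -lam*hconj - hu
      · field_simp; linear_combination (-lam)*hu - lam^2*hconj
      · field_simp
        linear_combination (1 - I*(lam.re:ℂ) + I*(lam.re:ℂ))*(-(lam - (lam.re:ℂ) + (lam.im:ℂ)*I)*hl +
          (lam.im:ℂ)^2*Complex.I_sq - hn) +
          (2*(lam.re:ℂ)*lam*(I*(lam.re:ℂ)-1) - 2*I*(lam.re:ℂ)^2*lam)*(lam*hconj + hu)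
    rw [h1]
    have hSinv : Invertible S := S.invertibleOfIsUnitDet ((Matrix.isUnit_iff_isUnit_det S).mp hSu)
    rw [Matrix.mul_assoc, eq_comm, Matrix.inv_mul_eq_iff_eq_mul_of_invertible]
    rw [hS, hC]
    ext i j
    fin_cases i <;> fin_cases j <;>
      simp [Matrix.mul_apply, Fin.sum_univ_two] <;> ring
  · -- a > 0 : *congruent to λΔ₂
    intro hpos
    set q : ℝ := Real.sqrt lam.re with hq_def
    have hq : 0 < q := Real.sqrt_pos.mpr hpos
    have hq2 : (q:ℂ)^2 = (lam.re:ℂ) := by norm_cast; exact Real.sq_sqrt hpos.le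
    have hqC : (q:ℂ) ≠ 0 := Complex.ofReal_ne_zero.mpr hq.ne'
    refine ⟨!![(↑(1/(lam.re*q)) : ℂ), ↑(lam.im/(2*q)); 0, (q:ℂ)], ?_, ?_⟩
    · rw [Matrix.isUnit_iff_isUnit_det, isUnit_iff_ne_zero]
      have : (!![(↑(1/(lam.re*q)) : ℂ), ↑(lam.im/(2*q)); 0, (q:ℂ)] : Matrix (Fin 2) (Fin 2) ℂ).det
          = ↑(1/(lam.re*q)) * (q:ℂ) := by simp [Matrix.det_fin_two_of]
      rw [this]
      apply mul_ne_zero _ hqC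
      rw [Complex.ofReal_ne_zero]
      positivity
    · ext i j
      fin_cases i <;> fin_cases j <;>
        simp only [Matrix.mul_apply, Fin.sum_univ_two, Matrix.conjTranspose_apply,
          Matrix.smul_apply, Matrix.cons_val', Matrix.cons_val_zero, Matrix.cons_val_one,
          Matrix.head_cons, Matrix.empty_val', Matrix.cons_val_fin_one, Matrix.head_fin_const,
          Matrix.of_apply, Complex.conj_ofReal, map_zero, smul_eq_mul,
          Fin.zero_eta, Fin.mk_one, Complex.star_def, star_zero] <;>
        push_cast <;>
        field_simp
      · ring
      · ring
      · ring
      · linear_combination (-4*(q:ℂ)^2*I)*hu - 4*I*lam*(q:ℂ)^2*hq2 -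
          4*(q:ℂ)^2*lam*(lam.im:ℂ)*Complex.I_sq
  · -- a < 0 : *congruent to -λΔ₂
    intro hneg
    set q : ℝ := Real.sqrt (-lam.re) with hq_def
    have hq : 0 < q := Real.sqrt_pos.mpr (by linarith)
    have hq2 : (q:ℂ)^2 = -(lam.re:ℂ) := by
      norm_cast; exact Real.sq_sqrt (by linarith)
    have hqC : (q:ℂ) ≠ 0 := Complex.ofReal_ne_zero.mpr hq.ne'
    refine ⟨!![(↑(1/((-lam.re)*q)) : ℂ), ↑(-lam.im/(2*q)); 0, (q:ℂ)], ?_, ?_⟩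
    · rw [Matrix.isUnit_iff_isUnit_det, isUnit_iff_ne_zero]
      have : (!![(↑(1/((-lam.re)*q)) : ℂ), ↑(-lam.im/(2*q)); 0, (q:ℂ)] :
          Matrix (Fin 2) (Fin 2) ℂ).det = ↑(1/((-lam.re)*q)) * (q:ℂ) := by
        simp [Matrix.det_fin_two_of]
      rw [this]
      apply mul_ne_zero _ hqC
      rw [Complex.ofReal_ne_zero]
      have : 0 < -lam.re := by linarith
      positivity
    · ext i j
      fin_cases i <;> fin_cases j <;>
        simp only [Matrix.mul_apply, Fin.sum_univ_two, Matrix.conjTranspose_apply,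
          Matrix.neg_apply, Matrix.smul_apply, Matrix.cons_val', Matrix.cons_val_zero,
          Matrix.cons_val_one, Matrix.head_cons, Matrix.empty_val', Matrix.cons_val_fin_one,
          Matrix.head_fin_const, Matrix.of_apply, Complex.conj_ofReal, map_zero, smul_eq_mul,
          Fin.zero_eta, Fin.mk_one, Complex.star_def, star_zero] <;>
        push_cast <;>
        field_simp
      · ring
      · ring
      · ring
      · linear_combination (-4*(q:ℂ)^2*I)*hu + 4*I*lam*(q:ℂ)^2*hq2 -
          4*(q:ℂ)^2*lam*(lam.im:ℂ)*Complex.I_sq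
end

section
/- Let n be odd and let (A₁, A₂) = ([J_n(0) \ J_n(0)ᵀ], [J_n(-2) \ -J_n(-2)ᵀ]), where [X \ Y] denotes the skew sum [[0,Y],[X,0]]. Then (A₁, A₂) is simultaneously congruent to ([J_n(0) \ J_n(0)ᵀ], [I_n \ -I_n]). -/
open Matrix

/-- The skew sum `[X \ Y] = [[0, Y],[X, 0]]`. -/
def skewSum {n : ℕ} (X Y : Matrix (Fin n) (Fin n) ℂ) :
    Matrix (Fin n ⊕ Fin n) (Fin n ⊕ Fin n) ℂ :=
  Matrix.fromBlocks 0 Y X 0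

def Vmat (n : ℕ) : Matrix (Fin n) (Fin n) ℂ :=
  Matrix.of fun i j => ((j : ℕ).choose (i : ℕ) : ℂ) * (-2) ^ (i : ℕ)

lemma JBlock0_apply {n : ℕ} (k j : Fin n) :
    JBlock n 0 k j = if (k : ℕ) + 1 = (j : ℕ) then 1 else 0 := by
  simp only [JBlock, of_apply]
  split_ifs with h1 h2 <;> try rfl
  · exfalso; subst h1; omega

lemma N_mul_apply {n : ℕ} (A : Matrix (Fin n) (Fin n) ℂ) (i j : Fin n) :
    (JBlock n 0 * A) i j
      = if h : (i : ℕ) + 1 < n then A ⟨(i : ℕ) + 1, h⟩ j else 0 := by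
  rw [mul_apply]
  split_ifs with h
  · rw [Finset.sum_eq_single (⟨(i : ℕ) + 1, h⟩ : Fin n)]
    · rw [JBlock0_apply]; simp
    · intro k _ hk
      rw [JBlock0_apply, if_neg, zero_mul]
      exact fun hh => hk (Fin.ext hh.symm)
    · simp
  · apply Finset.sum_eq_zero
    intro k _
    rw [JBlock0_apply, if_neg, zero_mul]
    intro hh; exact h (by omega)

lemma mul_N_apply {n : ℕ} (A : Matrix (Fin n) (Fin n) ℂ) (i j : Fin n) :
    (A * JBlock n 0) i j
      = if h : 0 < (j : ℕ) then A i ⟨(j : ℕ) - 1, lt_of_le_of_lt (Nat.sub_le _ _) j.isLt⟩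
        else 0 := by
  rw [mul_apply]
  split_ifs with h
  · rw [Finset.sum_eq_single (⟨(j : ℕ) - 1, lt_of_le_of_lt (Nat.sub_le _ _) j.isLt⟩ : Fin n)]
    · rw [JBlock0_apply, if_pos (by simp; omega), mul_one]
    · intro k _ hk
      rw [JBlock0_apply, if_neg, mul_zero]
      exact fun hh => hk (Fin.ext (by simp; omega))
    · simp
  · apply Finset.sum_eq_zero
    intro k _
    rw [JBlock0_apply, if_neg (by omega), mul_zero]

lemma JBlock_eq {n : ℕ} (μ : ℂ) :
    JBlock n μ = μ • (1 : Matrix (Fin n) (Fin n) ℂ) + JBlock n 0 := by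
  ext i j
  simp only [JBlock, of_apply, Matrix.add_apply, Matrix.smul_apply, Matrix.one_apply, smul_eq_mul]
  split_ifs <;> ring

lemma key (n : ℕ) :
    JBlock n 0 * Vmat n = JBlock n (-2) * (Vmat n * JBlock n 0) := by
  rw [JBlock_eq (-2), add_mul, smul_mul_assoc, one_mul]
  ext i j
  simp only [Matrix.add_apply, Matrix.smul_apply, smul_eq_mul]
  simp only [N_mul_apply, mul_N_apply]
  split_ifs with h1 h2 h2
  · -- i+1 < n, 0 < j : Pascal
    obtain ⟨m, hm⟩ : ∃ m, (j : ℕ) = m + 1 := ⟨(j : ℕ) - 1, by omega⟩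
    simp only [Vmat, of_apply, hm, Nat.add_sub_cancel]
    rw [Nat.choose_succ_succ]
    push_cast
    ring
  · -- i+1 < n, j = 0
    simp only [Vmat, of_apply]
    have hj0 : (j : ℕ) = 0 := by omega
    rw [hj0, Nat.choose_eq_zero_of_lt (by omega)]
    simp
  · -- i+1 = n, 0 < j
    simp only [Vmat, of_apply]
    rw [Nat.choose_eq_zero_of_lt (by omega)]
    simp
  · simp

lemma det_Vmat_isUnit (n : ℕ) : IsUnit (Vmat n).det := by
  rw [Matrix.det_of_upperTriangular (M := Vmat n)
    (by intro i j hij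
        simp only [Vmat, of_apply]
        rw [Nat.choose_eq_zero_of_lt (by exact_mod_cast hij), Nat.cast_zero, zero_mul])]
  rw [isUnit_iff_ne_zero, Finset.prod_ne_zero_iff]
  intro i _
  simp only [Vmat, of_apply, Nat.choose_self, Nat.cast_one, one_mul]
  exact pow_ne_zero _ (by norm_num)

lemma det_J2_isUnit (n : ℕ) : IsUnit (JBlock n (-2)).det := by
  rw [Matrix.det_of_upperTriangular (M := JBlock n (-2))
    (by intro i j hij
        have hij' : (j : ℕ) < (i : ℕ) := hij
        simp only [JBlock, of_apply]
        rw [if_neg (by exact fun h => by omega), if_neg (by omega)])]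
  rw [isUnit_iff_ne_zero, Finset.prod_ne_zero_iff]
  intro i _
  simp [JBlock]

/-- For odd `n`, the pair `([J_n(0) \ J_n(0)ᵀ], [J_n(-2) \ -J_n(-2)ᵀ])` is
simultaneously congruent to `([J_n(0) \ J_n(0)ᵀ], [I_n \ -I_n])`. -/
theorem pair_simultaneously_congruent (n : ℕ) (hn : Odd n) :
    ∃ R : Matrix (Fin n ⊕ Fin n) (Fin n ⊕ Fin n) ℂ, IsUnit R ∧
      Rᵀ * skewSum (JBlock n 0) ((JBlock n 0)ᵀ) * R = skewSum (JBlock n 0) ((JBlock n 0)ᵀ) ∧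
      Rᵀ * skewSum (JBlock n (-2)) (-(JBlock n (-2))ᵀ) * R = skewSum 1 (-1) := by
  have hWdet : IsUnit (JBlock n (-2) * Vmat n).det := by
    rw [Matrix.det_mul]
    exact (det_J2_isUnit n).mul (det_Vmat_isUnit n)
  have hWinv : (JBlock n (-2) * Vmat n)⁻¹ * (JBlock n (-2) * Vmat n) = 1 :=
    Matrix.nonsing_inv_mul _ hWdet
  have hB : (JBlock n (-2) * Vmat n)⁻¹ * JBlock n (-2) * Vmat n = 1 := by
    rw [Matrix.mul_assoc]; exact hWinv
  have hA : (JBlock n (-2) * Vmat n)⁻¹ * JBlock n 0 * Vmat n = JBlock n 0 := by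
    rw [Matrix.mul_assoc, key n, ← Matrix.mul_assoc, ← Matrix.mul_assoc, hB, one_mul]
  refine ⟨Matrix.fromBlocks (Vmat n) 0 0 ((JBlock n (-2) * Vmat n)⁻¹ᵀ), ?_, ?_, ?_⟩
  · rw [Matrix.isUnit_iff_isUnit_det, Matrix.det_fromBlocks_zero₁₂, Matrix.det_transpose]
    refine (det_Vmat_isUnit n).mul ?_
    exact IsUnit.of_mul_eq_one _ (by rw [← Matrix.det_mul, hWinv, Matrix.det_one])
  · simp only [skewSum, Matrix.fromBlocks_transpose, Matrix.transpose_zero,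
      Matrix.fromBlocks_multiply, Matrix.mul_zero, Matrix.zero_mul, Matrix.mul_one,
      Matrix.one_mul, add_zero, zero_add, Matrix.transpose_transpose]
    rw [Matrix.fromBlocks_inj]
    refine ⟨rfl, ?_, ?_, rfl⟩
    · have := congrArg Matrix.transpose hA
      simpa [Matrix.transpose_mul, Matrix.mul_assoc] using this
    · exact hA
  · simp only [skewSum, Matrix.fromBlocks_transpose, Matrix.transpose_zero,
      Matrix.fromBlocks_multiply, Matrix.mul_zero, Matrix.zero_mul, Matrix.mul_one,
      Matrix.one_mul, add_zero, zero_add, Matrix.transpose_transpose]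
    rw [Matrix.fromBlocks_inj]
    refine ⟨rfl, ?_, ?_, rfl⟩
    · have := congrArg Matrix.transpose hB
      simp only [Matrix.transpose_mul, Matrix.transpose_one] at this
      calc (Vmat n)ᵀ * -(JBlock n (-2))ᵀ * (JBlock n (-2) * Vmat n)⁻¹ᵀ
          = -((Vmat n)ᵀ * (JBlock n (-2))ᵀ * (JBlock n (-2) * Vmat n)⁻¹ᵀ) := by
            rw [Matrix.mul_neg, Matrix.neg_mul]
        _ = -1 := by rw [Matrix.mul_assoc, this]
    · exact hB
end

section
/- Let λ be unimodular with λ² ≠ -1 and set c = Im(λ)/Re(λ) ∈ ℝ. Then λ² = (1+ic)/(1-ic), and the symmetric matrix F_n := P_n(I_n + iJ_n(c)) satisfies: F_n⁻*F_n = λ²(I_n + a₁J_n(0) + a₂J_n(0)² + ···) with a₁ = 2i/(1+c²) ≠ 0, hence F_n⁻*F_n is similar to J_n(λ²). -/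
open Matrix Complex

/-- The n×n reversal matrix (1's on the antidiagonal). -/
def Pmat (n : ℕ) : Matrix (Fin n) (Fin n) ℂ :=
  Matrix.of fun i j => if (i : ℕ) + (j : ℕ) = n - 1 then 1 else 0

/-! ### Auxiliary lemmas -/

lemma JBlock_decomp (n : ℕ) (μ : ℂ) :
    JBlock n μ = μ • (1 : Matrix (Fin n) (Fin n) ℂ) + JBlock n 0 := by
  ext i j
  simp only [JBlock, Matrix.add_apply, Matrix.smul_apply, Matrix.one_apply, Matrix.of_apply,
    smul_eq_mul]
  by_cases h : i = j
  · simp [h]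
  · simp [h]

lemma JBlock0_pow (n m : ℕ) (i k : Fin n) :
    (JBlock n 0 ^ m) i k = if (i : ℕ) + m = (k : ℕ) then 1 else 0 := by
  induction m generalizing i k with
  | zero => simp [Matrix.one_apply, Fin.ext_iff]
  | succ m ih =>
    rw [pow_succ, Matrix.mul_apply]
    have hterm : ∀ x : Fin n, (JBlock n 0 ^ m) i x * JBlock n 0 x k
        = if (i:ℕ) + m = (x:ℕ) ∧ (x:ℕ) + 1 = (k:ℕ) then 1 else 0 := by
      intro x
      rw [ih]
      simp only [JBlock, Matrix.of_apply]
      by_cases h1 : (i:ℕ) + m = (x:ℕ)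
      · by_cases h2 : x = k
        · have : ¬ ((x:ℕ) + 1 = (k:ℕ)) := by simp [Fin.ext_iff] at h2; omega
          simp [h1, h2, this]
        · by_cases h3 : (x:ℕ) + 1 = (k:ℕ) <;> simp [h1, h2, h3]
      · simp [h1]
    simp only [hterm]
    by_cases h : (i:ℕ) + (m + 1) = (k:ℕ)
    · have hik : (i:ℕ) + m < n := by have := k.isLt; omega
      rw [Finset.sum_eq_single (⟨(i:ℕ) + m, hik⟩ : Fin n)]
      · rw [if_pos (by constructor <;> simp <;> omega), if_pos h]
      · intro b _ hb
        rw [if_neg]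
        rintro ⟨h1, h2⟩
        exact hb (Fin.ext (by simp only [Fin.val_mk]; omega))
      · simp
    · rw [if_neg h]
      apply Finset.sum_eq_zero
      intro b _
      rw [if_neg]
      rintro ⟨h1, h2⟩
      omega

lemma JBlock0_pow_n (n : ℕ) : (JBlock n 0) ^ n = 0 := by
  ext i k
  rw [JBlock0_pow]
  have : ¬ ((i:ℕ) + n = (k:ℕ)) := by have := k.isLt; omega
  simp [this]

lemma Pmat_mul_apply (n : ℕ) (X : Matrix (Fin n) (Fin n) ℂ) (i j : Fin n) :
    (Pmat n * X) i j = X i.rev j := by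
  rw [Matrix.mul_apply]
  have hrev : ∀ k : Fin n, (Pmat n) i k = if k = i.rev then 1 else 0 := by
    intro k
    have hi := i.isLt
    have hk := k.isLt
    simp only [Pmat, Matrix.of_apply, Fin.ext_iff, Fin.val_rev]
    by_cases h : (i:ℕ) + (k:ℕ) = n - 1
    · rw [if_pos h, if_pos (by omega)]
    · rw [if_neg h, if_neg (by omega)]
  simp only [hrev, ite_mul, one_mul, zero_mul, Finset.sum_ite_eq', Finset.mem_univ, if_true]

lemma Pmat_mul_Pmat (n : ℕ) : Pmat n * Pmat n = 1 := by
  ext i j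
  rw [Pmat_mul_apply]
  have hi := i.isLt
  have hj := j.isLt
  simp only [Pmat, Matrix.of_apply, Matrix.one_apply, Fin.val_rev, Fin.ext_iff]
  split_ifs with h1 h2 h2 <;> first | rfl | (exfalso; omega)

lemma one_add_smul_JBlock_apply (n : ℕ) (s c : ℂ) (a b : Fin n) :
    (1 + s • JBlock n c) a b =
      if (a:ℕ) = (b:ℕ) then 1 + s * c else if (a:ℕ) + 1 = (b:ℕ) then s else 0 := by
  simp only [Matrix.add_apply, Matrix.smul_apply, Matrix.one_apply, JBlock, Matrix.of_apply,
    smul_eq_mul]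
  by_cases h : (a:ℕ) = (b:ℕ)
  · have hab : a = b := Fin.ext h
    rw [if_pos hab, if_pos hab, if_pos h]
  · have hab : a ≠ b := fun hh => h (congrArg _ hh)
    rw [if_neg hab, if_neg hab, if_neg h, zero_add]
    by_cases h2 : (a:ℕ) + 1 = (b:ℕ)
    · rw [if_pos h2, if_pos h2, mul_one]
    · rw [if_neg h2, if_neg h2, mul_zero]

/-- A matrix of the form `μ•1 + K` with `K` strictly upper triangular having constant
superdiagonal `c₁ ≠ 0` (and arbitrary entries above) — in fact we only need the first
superdiagonal constant and everything on/below the diagonal zero — is similar to `JBlock n μ`. -/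
lemma similar_JBlock (n : ℕ) (hn : 1 ≤ n) (M : Matrix (Fin n) (Fin n) ℂ) (μ c₁ : ℂ)
    (hc : c₁ ≠ 0)
    (h0 : ∀ i k : Fin n, (k:ℕ) ≤ (i:ℕ) → (M - μ • 1) i k = 0)
    (h1 : ∀ i k : Fin n, (k:ℕ) = (i:ℕ) + 1 → (M - μ • 1) i k = c₁) :
    MatSimilar M (JBlock n μ) := by
  set K : Matrix (Fin n) (Fin n) ℂ := M - μ • 1 with hK
  have key : ∀ m : ℕ, (∀ i k : Fin n, (k:ℕ) < (i:ℕ) + m → (K ^ m) i k = 0) ∧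
      (∀ i k : Fin n, (k:ℕ) = (i:ℕ) + m → (K ^ m) i k = c₁ ^ m) := by
    intro m
    induction m with
    | zero =>
      constructor
      · intro i k hk
        have : i ≠ k := by simp [Fin.ext_iff]; omega
        simp [Matrix.one_apply, this]
      · intro i k hk
        have : i = k := Fin.ext (by omega)
        simp [Matrix.one_apply, this]
    | succ m ih =>
      constructor
      · intro i k hk
        rw [pow_succ, Matrix.mul_apply]
        apply Finset.sum_eq_zero
        intro l _
        by_cases hl : (l:ℕ) < (i:ℕ) + m
        · rw [ih.1 i l hl, zero_mul]
        · rw [h0 l k (by omega), mul_zero]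
      · intro i k hk
        have him : (i:ℕ) + m < n := by have := k.isLt; omega
        rw [pow_succ, Matrix.mul_apply]
        rw [Finset.sum_eq_single (⟨(i:ℕ) + m, him⟩ : Fin n)]
        · rw [ih.2 i _ (by simp), h1 _ k (by simp; omega), pow_succ]
        · intro b _ hb
          by_cases hbl : (b:ℕ) < (i:ℕ) + m
          · rw [ih.1 i b hbl, zero_mul]
          · have hbne : (b:ℕ) ≠ (i:ℕ) + m := fun h => hb (Fin.ext (by simp [h]))
            rw [h0 b k (by omega), mul_zero]
        · simp
  have hlast : n - 1 < n := by omega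
  set last : Fin n := ⟨n - 1, hlast⟩ with hlastdef
  set R : Matrix (Fin n) (Fin n) ℂ :=
    Matrix.of (fun i j => (K ^ (n - 1 - (j:ℕ))) i last) with hR
  have hRapp : ∀ i j : Fin n, R i j = (K ^ (n - 1 - (j:ℕ))) i last := fun i j => rfl
  have hR_tri : R.BlockTriangular id := by
    intro i j hij
    simp only [id_eq] at hij
    have hij' : (j:ℕ) < (i:ℕ) := hij
    have hjn := j.isLt
    rw [hRapp]
    exact (key _).1 i last (by simp only [hlastdef]; omega)
  have hR_diag : ∀ j : Fin n, R j j = c₁ ^ (n - 1 - (j:ℕ)) := by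
    intro j
    have hjn := j.isLt
    rw [hRapp]
    exact (key _).2 j last (by simp only [hlastdef]; omega)
  have hRu : IsUnit R.det := by
    rw [Matrix.det_of_upperTriangular hR_tri]
    rw [Finset.prod_congr rfl fun j (_ : j ∈ Finset.univ) => hR_diag j]
    exact isUnit_iff_ne_zero.mpr (Finset.prod_ne_zero_iff.mpr fun j _ => pow_ne_zero _ hc)
  have hKn : K ^ n = 0 := by
    ext i k
    rw [(key n).1 i k (by have := k.isLt; omega)]
    simp
  have hNcol : ∀ l j : Fin n, JBlock n 0 l j = if (l:ℕ) + 1 = (j:ℕ) then 1 else 0 := by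
    intro l j
    simp only [JBlock, Matrix.of_apply]
    by_cases h : l = j
    · have : ¬ ((l:ℕ) + 1 = (j:ℕ)) := by simp only [Fin.ext_iff] at h; omega
      simp [h, this]
    · simp [h]
  have hKR : K * R = R * JBlock n 0 := by
    ext i j
    have hLHS : (K * R) i j = (K ^ ((n - 1 - (j:ℕ)) + 1)) i last := by
      rw [pow_succ', Matrix.mul_apply, Matrix.mul_apply]
      rfl
    rw [hLHS, Matrix.mul_apply]
    simp only [hNcol, hRapp, mul_ite, mul_one, mul_zero]
    by_cases hj : (j:ℕ) = 0
    · have h1' : (n - 1 - (j:ℕ)) + 1 = n := by have := j.isLt; omega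
      rw [h1', hKn]
      symm
      apply Finset.sum_eq_zero
      intro l _
      rw [if_neg (by omega)]
    · have hj1 : (j:ℕ) - 1 < n := by have := j.isLt; omega
      have hcond : ∀ l : Fin n, ((l:ℕ) + 1 = (j:ℕ)) ↔ l = (⟨(j:ℕ) - 1, hj1⟩ : Fin n) := by
        intro l
        simp only [Fin.ext_iff]
        omega
      rw [Finset.sum_congr rfl fun l _ => if_congr (hcond l) rfl rfl]
      rw [Finset.sum_ite_eq' Finset.univ (⟨(j:ℕ) - 1, hj1⟩ : Fin n)
        (fun l => (K ^ (n - 1 - (l:ℕ))) i last)]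
      simp only [Finset.mem_univ, if_true]
      have hexp : (n - 1 - (j:ℕ)) + 1 = n - 1 - ((j:ℕ) - 1) := by have := j.isLt; omega
      rw [hexp]
  have hM : M = μ • 1 + K := by rw [hK]; abel
  have hMR : M * R = R * JBlock n μ := by
    rw [hM, JBlock_decomp, add_mul, mul_add, Matrix.smul_mul, Matrix.mul_smul, one_mul, mul_one,
      hKR]
  refine ⟨R⁻¹, (Matrix.isUnit_nonsing_inv_iff).mpr ((Matrix.isUnit_iff_isUnit_det R).mpr hRu), ?_⟩
  rw [Matrix.nonsing_inv_nonsing_inv R hRu, ← hMR,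
    Matrix.mul_nonsing_inv_cancel_right _ _ hRu]

/-- For unimodular `λ` with `λ² ≠ -1` and `c = Im λ / Re λ ∈ ℝ`, one has
`λ² = (1+ic)/(1-ic)`, and the symmetric matrix `F_n = P_n(I + iJ_n(c))` satisfies
`F_n⁻*F_n = λ²(I + a₁J_n(0) + a₂J_n(0)² + ⋯)` with `a₁ = 2i/(1+c²) ≠ 0`, hence
`F_n⁻*F_n` is similar to `J_n(λ²)`. -/
theorem typeI_block_Fn (n : ℕ) (hn : 1 ≤ n) (lam : ℂ) (hlam : ‖lam‖ = 1)
    (h2 : lam ^ 2 ≠ -1) :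
    lam ^ 2 = (1 + I * ((lam.im / lam.re : ℝ) : ℂ)) / (1 - I * ((lam.im / lam.re : ℝ) : ℂ)) ∧
    (Pmat n * (1 + I • JBlock n ((lam.im / lam.re : ℝ) : ℂ)))ᵀ =
      Pmat n * (1 + I • JBlock n ((lam.im / lam.re : ℝ) : ℂ)) ∧
    (∃ a : ℕ → ℂ, a 0 = 1 ∧ a 1 = 2 * I / (1 + ((lam.im / lam.re : ℝ) : ℂ) ^ 2) ∧ a 1 ≠ 0 ∧
      ((Pmat n * (1 + I • JBlock n ((lam.im / lam.re : ℝ) : ℂ)))ᴴ)⁻¹ *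
          (Pmat n * (1 + I • JBlock n ((lam.im / lam.re : ℝ) : ℂ))) =
        lam ^ 2 • ∑ j ∈ Finset.range n, a j • JBlock n 0 ^ j) ∧
    MatSimilar (((Pmat n * (1 + I • JBlock n ((lam.im / lam.re : ℝ) : ℂ)))ᴴ)⁻¹ *
        (Pmat n * (1 + I • JBlock n ((lam.im / lam.re : ℝ) : ℂ))))
      (JBlock n (lam ^ 2)) := by
  -- basic scalar facts
  have hre : lam.re ≠ 0 := by
    intro h
    apply h2
    have h1 : lam.re * lam.re + lam.im * lam.im = 1 := by
      rw [← Complex.normSq_apply, ← Complex.sq_norm, hlam]; norm_num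
    apply Complex.ext <;> simp [pow_two, Complex.mul_re, Complex.mul_im, h] <;>
      nlinarith [h1, h]
  set x : ℝ := lam.im / lam.re with hx
  set c : ℂ := (x : ℂ) with hcdef
  have h1mc : (1:ℂ) - I * c ≠ 0 := by
    intro h
    have := congrArg Complex.re h
    simp [hcdef] at this
  have h1pc : (1:ℂ) + I * c ≠ 0 := by
    intro h
    have := congrArg Complex.re h
    simp [hcdef] at this
  have hc2 : ((1:ℂ) + I * c) * (1 - I * c) = 1 + c ^ 2 := by
    linear_combination (-(c^2)) * Complex.I_sq
  have h1cc : (1:ℂ) + c ^ 2 ≠ 0 := by rw [← hc2]; exact mul_ne_zero h1pc h1mc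
  have hrm : (lam.re:ℂ)^2 + (lam.im:ℂ)^2 = 1 := by
    have h1 : lam.re * lam.re + lam.im * lam.im = 1 := by
      rw [← Complex.normSq_apply, ← Complex.sq_norm, hlam]; norm_num
    have h1' : lam.re ^ 2 + lam.im ^ 2 = 1 := by nlinarith [h1]
    exact_mod_cast congrArg (fun t : ℝ => (t : ℂ)) h1'
  have hlam2 : lam ^ 2 * (1 - I * c) = 1 + I * c := by
    have hl : lam = (lam.re : ℂ) + (lam.im : ℂ) * I := by apply Complex.ext <;> simp
    have hr : (lam.re : ℂ) ≠ 0 := Complex.ofReal_ne_zero.mpr hre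
    rw [hcdef, hx]
    push_cast
    field_simp
    linear_combination ((lam + (lam.re:ℂ) + (lam.im:ℂ)*I)*((lam.re:ℂ) - I*(lam.im:ℂ)))*hl +
      ((lam.re:ℂ)+(lam.im:ℂ)*I)*hrm + (-((lam.im:ℂ)^2)*((lam.re:ℂ)+(lam.im:ℂ)*I))*Complex.I_sq
  have hlam2' : lam ^ 2 = (1 + I * c) / (1 - I * c) := by
    rw [eq_div_iff h1mc]; exact hlam2
  refine ⟨hlam2', ?_, ?_, ?_⟩
  -- Part 2: symmetry
  · ext i j
    rw [Matrix.transpose_apply, Pmat_mul_apply, Pmat_mul_apply,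
      one_add_smul_JBlock_apply, one_add_smul_JBlock_apply]
    have hi := i.isLt
    have hj := j.isLt
    simp only [Fin.val_rev]
    split_ifs <;> first | rfl | (exfalso; omega)
  -- Parts 3 and 4 share the key computation
  all_goals {
    have hFH : (Pmat n * (1 + I • JBlock n c))ᴴ = Pmat n * (1 - I • JBlock n c) := by
      have hsub : (1 : Matrix (Fin n) (Fin n) ℂ) - I • JBlock n c
          = 1 + (-I) • JBlock n c := by rw [neg_smul, sub_eq_add_neg]
      ext i j
      rw [Matrix.conjTranspose_apply, Pmat_mul_apply, Pmat_mul_apply, hsub,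
        one_add_smul_JBlock_apply, one_add_smul_JBlock_apply]
      have hi := i.isLt
      have hj := j.isLt
      have hstar1 : star ((1:ℂ) + I * c) = 1 + (-I) * c := by
        rw [hcdef]; simp [Complex.ext_iff]
      have hstarI : star Complex.I = -Complex.I := Complex.conj_I
      simp only [Fin.val_rev]
      split_ifs <;> first
        | (exfalso; omega)
        | exact hstar1
        | exact hstarI
        | exact star_zero _
    set N : Matrix (Fin n) (Fin n) ℂ := JBlock n 0 with hN
    set u : ℂ := I / (1 - I * c) with hu
    set α : ℂ := (I * c - 1)/(1 + I * c) with hα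
    set β : ℂ := 2/(1 + I * c) with hβ
    set a : ℕ → ℂ := fun j => if j = 0 then (1:ℂ) else (2*I/(1+c^2)) * (I/(1-I*c))^(j-1)
      with hadef
    have ha0 : a 0 = 1 := by simp [hadef]
    have ha1 : a 1 = 2 * I / (1 + c ^ 2) := by simp [hadef]
    have ha1ne : a 1 ≠ 0 := by
      rw [ha1]
      exact div_ne_zero (mul_ne_zero two_ne_zero Complex.I_ne_zero) h1cc
    set G : Matrix (Fin n) (Fin n) ℂ := ∑ j ∈ Finset.range n, (u • N) ^ j with hG
    have hNn : N ^ n = 0 := JBlock0_pow_n n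
    have huNn : (u • N) ^ n = 0 := by rw [smul_pow, hNn, smul_zero]
    have hG1 : (1 - u • N) * G = 1 := by
      have h := mul_geom_sum (u • N) n
      rw [huNn, zero_sub] at h
      rw [← neg_sub (u • N) 1, neg_mul, h, neg_neg]
    have hαβ : α + β = 1 := by rw [hα, hβ]; field_simp; ring
    have hβu : β * u = 2*I/(1+c^2) := by
      rw [hβ, hu, div_mul_div_comm, hc2]
    have huc : (1 - I*c) * u = I := by rw [hu]; field_simp
    have hS : (∑ j ∈ Finset.range n, a j • N ^ j)
        = α • (1 : Matrix (Fin n) (Fin n) ℂ) + β • G := by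
      have hterm : ∀ j ∈ Finset.range n, a j • N ^ j
          = (if j = 0 then α • N ^ j else 0) + (β * u ^ j) • N ^ j := by
        intro j _
        rw [hadef]
        by_cases hj : j = 0
        · subst hj
          simp only [reduceIte, pow_zero, mul_one, one_smul]
          rw [← add_smul, hαβ, one_smul]
        · simp only [if_neg hj, zero_add]
          have hj' : j = (j-1)+1 := by omega
          have hpow : u ^ j = u ^ (j - 1) * u := by conv_lhs => rw [hj', pow_succ]
          have h2' : β * u ^ j = (2*I/(1+c^2)) * u ^ (j-1) := by
            rw [hpow, show β * (u^(j-1)*u) = (β*u)*u^(j-1) from by ring, hβu]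
          rw [h2', ← hu]
      rw [Finset.sum_congr rfl hterm, Finset.sum_add_distrib]
      congr 1
      · rw [Finset.sum_ite_eq' (Finset.range n) 0 (fun j => α • N ^ j),
          if_pos (Finset.mem_range.mpr (by omega)), pow_zero]
      · rw [Finset.smul_sum]
        exact Finset.sum_congr rfl fun j _ => by rw [smul_pow, smul_smul]
    have e1 : (1 : Matrix (Fin n) (Fin n) ℂ) - I • JBlock n c = (1 - I*c) • (1 - u • N) := by
      rw [JBlock_decomp, smul_sub, smul_smul, huc, smul_add, smul_smul, sub_smul, one_smul]
      abel
    have e2 : (1 : Matrix (Fin n) (Fin n) ℂ) + I • JBlock n c = (1 + I*c) • 1 + I • N := by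
      rw [JBlock_decomp, smul_add, smul_smul, add_smul, one_smul]
      abel
    have hinner : (1 - I • JBlock n c) * (lam ^ 2 • ∑ j ∈ Finset.range n, a j • N ^ j)
        = 1 + I • JBlock n c := by
      rw [hS, e1, e2]
      have e3 : (1 - u • N) * (α • (1:Matrix (Fin n) (Fin n) ℂ) + β • G)
          = α • 1 - (α*u) • N + β • (1:Matrix (Fin n) (Fin n) ℂ) := by
        rw [mul_add, mul_smul_comm, mul_smul_comm, hG1, mul_one, smul_sub, smul_smul]
      rw [smul_mul_assoc, mul_smul_comm, e3, smul_smul]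
      set s : ℂ := (1 - I*c) * lam ^ 2 with hs
      have hs' : s = 1 + I * c := by rw [hs, mul_comm, hlam2]
      have hx1 : s * α + s * β = 1 + I*c := by
        rw [show s * α + s * β = s * (α + β) from by ring, hαβ, mul_one, hs']
      have hx2 : s * (α * u) = -I := by
        rw [hs', hα, hu]
        field_simp
        ring
      rw [smul_add, smul_sub, smul_smul, smul_smul, smul_smul]
      calc (s * α) • (1:Matrix (Fin n) (Fin n) ℂ) - (s * (α*u)) • N
            + (s * β) • (1:Matrix (Fin n) (Fin n) ℂ)
          = (s * α + s * β) • (1:Matrix (Fin n) (Fin n) ℂ) + (-(s * (α*u))) • N := by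
            rw [add_smul, neg_smul]; abel
        _ = (1 + I*c) • 1 + I • N := by rw [hx1, hx2, neg_neg]
    have hcore : (Pmat n * (1 - I • JBlock n c)) *
        (lam ^ 2 • ∑ j ∈ Finset.range n, a j • N ^ j)
        = Pmat n * (1 + I • JBlock n c) := by
      rw [mul_assoc, hinner]
    -- invertibility of Fᴴ
    have hW : (1 - I • JBlock n c) * ((1 - I*c)⁻¹ • G) = 1 := by
      rw [e1, Matrix.smul_mul, Matrix.mul_smul, smul_smul, hG1,
        mul_inv_cancel₀ h1mc, one_smul]
    have hFHinv : (Pmat n * (1 - I • JBlock n c)) * (((1 - I*c)⁻¹ • G) * Pmat n) = 1 := by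
      rw [mul_assoc, ← mul_assoc (1 - I • JBlock n c), hW, one_mul, Pmat_mul_Pmat]
    have hFHdet : IsUnit (Pmat n * (1 - I • JBlock n c)).det :=
      Matrix.isUnit_det_of_right_inverse hFHinv
    have hpart3 : ((Pmat n * (1 + I • JBlock n c))ᴴ)⁻¹ * (Pmat n * (1 + I • JBlock n c))
        = lam ^ 2 • ∑ j ∈ Finset.range n, a j • N ^ j := by
      rw [hFH, ← hcore, ← mul_assoc, Matrix.nonsing_inv_mul _ hFHdet, one_mul]
    clear hcore hW hFHinv hinner
    -- dispatch part 3 and part 4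
    first
    | exact ⟨a, ha0, ha1, ha1ne, hpart3⟩
    | -- part 4
      rw [hpart3]
      set M : Matrix (Fin n) (Fin n) ℂ :=
        lam ^ 2 • ∑ j ∈ Finset.range n, a j • N ^ j with hM
      have hlamne : lam ≠ 0 := by
        intro h; rw [h] at hlam; simp at hlam
      have hc1ne : lam ^ 2 * a 1 ≠ 0 := mul_ne_zero (pow_ne_zero 2 hlamne) ha1ne
      have hSent : ∀ i k : Fin n, (∑ j ∈ Finset.range n, a j • N ^ j) i k
          = if (i:ℕ) ≤ (k:ℕ) then a ((k:ℕ) - (i:ℕ)) else 0 := by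
        intro i k
        rw [Matrix.sum_apply]
        simp only [Matrix.smul_apply, hN, JBlock0_pow, smul_eq_mul, mul_ite, mul_one, mul_zero]
        by_cases h : (i:ℕ) ≤ (k:ℕ)
        · rw [if_pos h, Finset.sum_eq_single ((k:ℕ) - (i:ℕ))]
          · rw [if_pos (by omega)]
          · intro b _ hb
            rw [if_neg (by omega)]
          · intro hmem
            exact absurd (Finset.mem_range.mpr (by have := k.isLt; omega)) hmem
        · rw [if_neg h]
          apply Finset.sum_eq_zero
          intro b _
          rw [if_neg (by omega)]
      have hMent : ∀ i k : Fin n, (M - lam ^ 2 • 1) i k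
          = lam ^ 2 * ((if (i:ℕ) ≤ (k:ℕ) then a ((k:ℕ) - (i:ℕ)) else 0)
              - (if i = k then 1 else 0)) := by
        intro i k
        rw [Matrix.sub_apply, hM, Matrix.smul_apply, Matrix.smul_apply, Matrix.one_apply, hSent]
        simp only [smul_eq_mul]
        ring
      apply similar_JBlock n hn M (lam ^ 2) (lam ^ 2 * a 1) hc1ne
      · intro i k hk
        rw [hMent]
        by_cases he : (i:ℕ) = (k:ℕ)
        · have hik : i = k := Fin.ext he
          rw [if_pos (by omega), show (k:ℕ) - (i:ℕ) = 0 from by omega, ha0, if_pos hik]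
          ring
        · have hik : i ≠ k := fun hh => he (congrArg _ hh)
          rw [if_neg (by omega), if_neg hik]
          ring
      · intro i k hk
        rw [hMent]
        have hik : i ≠ k := fun hh => by rw [hh] at hk; omega
        rw [if_pos (by omega), show (k:ℕ) - (i:ℕ) = 1 from by omega, if_neg hik]
        ring
  }
end
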